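/- arXiv:2511.21099 — 5 statements merged into one kernel-verified Lean document; each statement's English description precedes it below -/
import Mathlib

section
/- Let y be a fractional allocation of the items M to the agents N whose allocation graph G_y is acyclic, and suppose every agent i has an additive valuation v_i : 2^M → ℝ≥0. Then there exists an integral allocation (A_1,…,A_n), with A_i ⊆ { j : y_{i,j} > 0 } for each agent i, such that for every agent i, v_i(A_i) ≥ Σ_{j∈M} v_i({j}) y_{i,j} − α_i, where α_i = max_{j : y_{i,j} > 0} v_i({j}). -/
open Finset

/-- A fractional allocation: entries in `[0,1]`, each item fully allocated. -/
def IsFracAlloc {N M : Type*} [Fintype N] (x : N → M → ℝ) : Prop :=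
  (∀ i j, 0 ≤ x i j ∧ x i j ≤ 1) ∧ ∀ j, ∑ i, x i j = 1

/-- The bipartite allocation graph on `N ⊕ M`: agent `i` is adjacent to item `j`
iff `x i j > 0`. -/
def allocGraph {N M : Type*} (x : N → M → ℝ) : SimpleGraph (N ⊕ M) where
  Adj a b :=
    (∃ i j, a = Sum.inl i ∧ b = Sum.inr j ∧ 0 < x i j) ∨
    (∃ i j, a = Sum.inr j ∧ b = Sum.inl i ∧ 0 < x i j)
  symm := by
    constructor
    rintro a b (⟨i, j, rfl, rfl, h⟩ | ⟨i, j, rfl, rfl, h⟩)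
    · exact Or.inr ⟨i, j, rfl, rfl, h⟩
    · exact Or.inl ⟨i, j, rfl, rfl, h⟩
  loopless := by
    constructor
    rintro a (⟨i, j, rfl, h, -⟩ | ⟨i, j, rfl, h, -⟩) <;> simp at h

/-- An additive valuation. -/
def IsAdditive {M : Type*} (v : Finset M → NNReal) : Prop :=
  ∀ S : Finset M, v S = ∑ j ∈ S, v {j}

/-- A monotone valuation. -/
def IsMonotoneVal {M : Type*} (v : Finset M → NNReal) : Prop :=
  ∀ A B : Finset M, A ⊆ B → v A ≤ v B

/-- A submodular valuation. -/
def IsSubmodular {M : Type*} [DecidableEq M] (v : Finset M → NNReal) : Prop :=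
  ∀ A B : Finset M, v (A ∪ B) + v (A ∩ B) ≤ v A + v B

/-- A normalized valuation. -/
def IsNormalized {M : Type*} (v : Finset M → NNReal) : Prop := v ∅ = 0

/-- The multilinear extension of a set function. -/
noncomputable def mlExt {M : Type*} [Fintype M] [DecidableEq M]
    (v : Finset M → NNReal) (y : M → ℝ) : ℝ :=
  ∑ S : Finset M, (v S : ℝ) * ((∏ j ∈ S, y j) * ∏ j ∈ Sᶜ, (1 - y j))

/-- `max_{j : row j > 0} v {j}` (0 if the support is empty). -/
noncomputable def maxOnSupport {M : Type*} [Fintype M]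
    (v : Finset M → NNReal) (row : M → ℝ) : NNReal :=
  (Finset.univ.filter fun j => 0 < row j).sup fun j => v {j}

/-- An integral allocation: a partition of the items among the agents. -/
def IsPartition {N M : Type*} (A : N → Finset M) : Prop := ∀ j : M, ∃! i : N, j ∈ A i

/-- The concave closure `f⁺` of a set function. -/
noncomputable def concaveClosure {M : Type*} [Fintype M] [DecidableEq M]
    (v : Finset M → NNReal) (y : M → ℝ) : ℝ :=
  sSup {r : ℝ | ∃ lam : Finset M → ℝ, (∀ S, 0 ≤ lam S) ∧ (∑ S : Finset M, lam S = 1) ∧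
    (∀ j : M, (∑ S : Finset M, lam S * (if j ∈ S then 1 else 0)) = y j) ∧
    r = ∑ S : Finset M, lam S * (v S : ℝ)}

/-- The maximin-share value of `v` over `n` parts. -/
noncomputable def mmsValue {M : Type*} (n : ℕ) (v : Finset M → NNReal) : ℝ :=
  sSup {r : ℝ | ∃ P : Fin n → Finset M, (∀ j : M, ∃! k, j ∈ P k) ∧ r = ⨅ k, (v (P k) : ℝ)}

lemma helper_two {V : Type*} [DecidableEq V] {G : SimpleGraph V} (hac : G.IsAcyclic) {r a b : V}
    (p : G.Walk a r) (hp : p.IsPath) (q : G.Walk b r) (hq : q.IsPath) (hadj : G.Adj a b) :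
    p.getVert 1 = b ∨ q.getVert 1 = a := by
  by_cases hmem : a ∈ q.support
  · right
    have hdrop := hq.dropUntil hmem
    have hbd : b ∉ (q.dropUntil a hmem).support := by
      have hnd : (q.support).Nodup := hq.support_nodup
      rw [← q.take_spec hmem, SimpleGraph.Walk.support_append] at hnd
      have hb1 : b ∈ (q.takeUntil a hmem).support := SimpleGraph.Walk.start_mem_support _
      have hb2 : b ∉ ((q.dropUntil a hmem).support).tail :=
        List.disjoint_of_nodup_append hnd hb1
      rw [SimpleGraph.Walk.support_eq_cons (q.dropUntil a hmem)]
      simp only [List.mem_cons]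
      rintro (rfl | hb)
      · exact hadj.ne rfl
      · exact hb2 hb
    have hw : (SimpleGraph.Walk.cons hadj.symm (q.dropUntil a hmem)).IsPath := hdrop.cons hbd
    have heq : SimpleGraph.Walk.cons hadj.symm (q.dropUntil a hmem) = q :=
      congrArg Subtype.val (hac.path_unique ⟨_, hw⟩ ⟨q, hq⟩)
    rw [← heq]
    simp [SimpleGraph.Walk.getVert_cons_succ, SimpleGraph.Walk.getVert_zero]
  · left
    have hw : (SimpleGraph.Walk.cons hadj q).IsPath := hq.cons hmem
    have heq : SimpleGraph.Walk.cons hadj q = p :=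
      congrArg Subtype.val (hac.path_unique ⟨_, hw⟩ ⟨p, hp⟩)
    rw [← heq]
    simp [SimpleGraph.Walk.getVert_cons_succ, SimpleGraph.Walk.getVert_zero]

lemma forest_par {V : Type*} [DecidableEq V] {G : SimpleGraph V} (hac : G.IsAcyclic) :
    ∃ par : V → V, (∀ a, par a = a ∨ G.Adj a (par a)) ∧
      ∀ a b, G.Adj a b → par a = b ∨ par b = a := by
  classical
  set root : V → V := fun w => Quot.out (G.connectedComponentMk w) with hrootdef
  have hreach : ∀ w, G.Reachable w (root w) := fun w =>
    (SimpleGraph.ConnectedComponent.exact (Quot.out_eq (G.connectedComponentMk w))).symm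
  let pth : ∀ w, G.Path w (root w) := fun w => (Classical.choice (hreach w)).toPath
  have hpth : ∀ w, ((pth w : G.Walk w (root w))).IsPath := fun w => (pth w).2
  refine ⟨fun w => (pth w : G.Walk w (root w)).getVert 1, ?_, ?_⟩
  · intro a
    by_cases h : (pth a : G.Walk a (root a)).length = 0
    · left
      show (pth a : G.Walk a (root a)).getVert 1 = a
      rw [SimpleGraph.Walk.getVert_of_length_le _ (by omega)]
      exact (SimpleGraph.Walk.eq_of_length_eq_zero h).symm
    · right
      have := (pth a : G.Walk a (root a)).adj_getVert_succ (i := 0) (by omega)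
      simpa using this
  · intro a b hadj
    have hroot : root b = root a :=
      congrArg Quot.out (SimpleGraph.ConnectedComponent.connectedComponentMk_eq_of_adj hadj).symm
    rcases helper_two hac (pth a : G.Walk a (root a)) (hpth a)
        ((pth b : G.Walk b (root b)).copy rfl hroot)
        (by rw [SimpleGraph.Walk.isPath_copy]; exact hpth b) hadj with h | h
    · exact Or.inl h
    · right; rwa [SimpleGraph.Walk.getVert_copy] at h

/-- rounding an acyclic fractional allocation, additive valuations. -/
theorem stmt1 {N M : Type*} [Fintype N] [Fintype M] [DecidableEq M]
    (v : N → Finset M → NNReal) (hv : ∀ i, IsAdditive (v i))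
    (y : N → M → ℝ) (hy : IsFracAlloc y) (hac : (allocGraph y).IsAcyclic) :
    ∃ A : N → Finset M, IsPartition A ∧
      (∀ i j, j ∈ A i → 0 < y i j) ∧
      ∀ i, (∑ j, (v i {j} : ℝ) * y i j) - (maxOnSupport (v i) (y i) : ℝ) ≤ (v i (A i) : ℝ) := by
  classical
  obtain ⟨par, hpar1, hpar2⟩ := forest_par (G := allocGraph y) hac
  have hex : ∀ j, ∃ i, 0 < y i j := by
    intro j
    by_contra h
    push_neg at h
    have h1 : ∑ i, y i j ≤ 0 := Finset.sum_nonpos (fun i _ => h i)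
    have := hy.2 j
    linarith
  choose i0 hi0 using hex
  set f : M → N := fun j => Sum.elim id (fun _ => i0 j) (par (Sum.inr j)) with hf
  -- adjacency facts
  have hadjy : ∀ i j, (allocGraph y).Adj (Sum.inl i) (Sum.inr j) ↔ 0 < y i j := by
    intro i j
    constructor
    · rintro (⟨i', j', hi', hj', hpos⟩ | ⟨i', j', hi', hj', hpos⟩)
      · rw [Sum.inl.injEq] at hi'; rw [Sum.inr.injEq] at hj'; rwa [hi', hj']
      · exact absurd hi' (by simp)
    · intro h; exact Or.inl ⟨i, j, rfl, rfl, h⟩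
  have hfy : ∀ j, 0 < y (f j) j := by
    intro j
    rcases hpar1 (Sum.inr j) with h | h
    · rw [hf]; simp only [h, Sum.elim_inr]; exact hi0 j
    · rcases h with ⟨i', j', hi', hj', hpos⟩ | ⟨i', j', hi', hj', hpos⟩
      · exact absurd hi' (by simp)
      · rw [Sum.inr.injEq] at hi'
        rw [hf]; simp only [hj', Sum.elim_inl, id]
        rw [hi']; exact hpos
  have hkey : ∀ i j, 0 < y i j → f j ≠ i → par (Sum.inl i) = Sum.inr j := by
    intro i j hpos hne
    rcases hpar2 _ _ ((hadjy i j).mpr hpos) with h | h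
    · exact h
    · exact absurd (by rw [hf]; simp [h]) hne
  refine ⟨fun i => Finset.univ.filter (fun j => f j = i), ?_, ?_, ?_⟩
  · intro j
    refine ⟨f j, by simp, fun i hi => ?_⟩
    simp only [Finset.mem_filter, Finset.mem_univ, true_and] at hi
    exact hi.symm
  · intro i j hj
    simp only [Finset.mem_filter, Finset.mem_univ, true_and] at hj
    rw [← hj]; exact hfy j
  · intro i
    set A : Finset M := Finset.univ.filter (fun j => f j = i) with hA
    set S : Finset M := Finset.univ.filter (fun j => 0 < y i j) with hS
    have hAS : A ⊆ S := by
      intro j hj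
      simp only [hA, hS, Finset.mem_filter, Finset.mem_univ, true_and] at hj ⊢
      rw [← hj]; exact hfy j
    have hsumS : ∑ j, (v i {j} : ℝ) * y i j = ∑ j ∈ S, (v i {j} : ℝ) * y i j := by
      refine (Finset.sum_subset (Finset.subset_univ S) ?_).symm
      intro j _ hj
      simp only [hS, Finset.mem_filter, Finset.mem_univ, true_and, not_lt] at hj
      have : y i j = 0 := le_antisymm hj (hy.1 i j).1
      rw [this, mul_zero]
    have hsplit : ∑ j ∈ S \ A, (v i {j} : ℝ) * y i j + ∑ j ∈ A, (v i {j} : ℝ) * y i j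
        = ∑ j ∈ S, (v i {j} : ℝ) * y i j := Finset.sum_sdiff hAS
    have hAle : ∑ j ∈ A, (v i {j} : ℝ) * y i j ≤ (v i A : ℝ) := by
      rw [hv i A]
      push_cast
      refine Finset.sum_le_sum ?_
      intro j _
      have h1 : y i j ≤ 1 := (hy.1 i j).2
      nlinarith [(v i {j}).coe_nonneg]
    have hTle : ∑ j ∈ S \ A, (v i {j} : ℝ) * y i j ≤ (maxOnSupport (v i) (y i) : ℝ) := by
      rcases Finset.eq_empty_or_nonempty (S \ A) with he | ⟨j1, hj1⟩
      · rw [he, Finset.sum_empty]; exact (maxOnSupport (v i) (y i)).coe_nonneg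
      · have huniq : ∀ j ∈ S \ A, j = j1 := by
          intro j hj
          have h1 : par (Sum.inl i) = Sum.inr j := by
            simp only [hS, hA, Finset.mem_sdiff, Finset.mem_filter, Finset.mem_univ,
              true_and] at hj
            exact hkey i j hj.1 hj.2
          have h2 : par (Sum.inl i) = Sum.inr j1 := by
            simp only [hS, hA, Finset.mem_sdiff, Finset.mem_filter, Finset.mem_univ,
              true_and] at hj1
            exact hkey i j1 hj1.1 hj1.2
          rw [h1] at h2
          exact (Sum.inr.injEq _ _).mp h2
        have heq : S \ A = {j1} := by
          apply Finset.eq_singleton_iff_unique_mem.mpr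
          exact ⟨hj1, huniq⟩
        rw [heq, Finset.sum_singleton]
        have hmem : j1 ∈ Finset.univ.filter (fun j => 0 < y i j) := by
          have := Finset.mem_sdiff.mp hj1
          simpa [hS] using this.1
        have hle : v i {j1} ≤ maxOnSupport (v i) (y i) :=
          Finset.le_sup (f := fun j => v i {j}) hmem
        have h1 : y i j1 ≤ 1 := (hy.1 i j1).2
        have h0 : (0:ℝ) ≤ (v i {j1} : ℝ) := (v i {j1}).coe_nonneg
        have hle' : (v i {j1} : ℝ) ≤ (maxOnSupport (v i) (y i) : ℝ) := by exact_mod_cast hle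
        nlinarith
    rw [hsumS, ← hsplit]
    linarith
end

section
/- Let x be a fractional allocation of the items M to the agents N, suppose every agent i has an additive valuation v_i : 2^M → ℝ≥0, and let ε ∈ (0,1) satisfy max_{j : x_{i,j} > 0} v_i({j}) ≤ ε · Σ_{j∈M} v_i({j}) x_{i,j} for every agent i. Then there exists an integral allocation (Z_1,…,Z_n) such that for every agent i, v_i(Z_i) ≥ (1 − ε) · Σ_{j∈M} v_i({j}) x_{i,j}. -/
open Finset

set_option linter.unusedSectionVars false
set_option maxHeartbeats 1000000
noncomputable section
namespace Stmt2Aux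
variable {N M : Type*} [Fintype N] [Fintype M] [DecidableEq M] [DecidableEq N]
variable {N M : Type*} [Fintype N] [Fintype M] [DecidableEq M] [DecidableEq N]

def fracSet (x : N → M → ℝ) : Finset M :=
  @Finset.filter M (fun j => ¬∃ i, x i j = 1) (fun _ => Classical.dec _) Finset.univ

lemma mem_fracSet {x : N → M → ℝ} {j : M} : j ∈ fracSet x ↔ ¬∃ i, x i j = 1 := by
  simp [fracSet]

def suppF (x : N → M → ℝ) : Finset (N × M) :=
  Finset.univ.filter fun e => 0 < x e.1 e.2

lemma mem_suppF {x : N → M → ℝ} {e : N × M} : e ∈ suppF x ↔ 0 < x e.1 e.2 := by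
  simp [suppF]

lemma suppF_card_lt {x x' : N → M → ℝ} (h1 : ∀ a b, 0 < x' a b → 0 < x a b)
    {e : N × M} (he : 0 < x e.1 e.2) (he' : x' e.1 e.2 = 0) :
    (suppF x').card < (suppF x).card := by
  apply Finset.card_lt_card
  constructor
  · intro f hf; rw [mem_suppF] at *; exact h1 _ _ hf
  · intro hsub
    have := hsub (mem_suppF.mpr he)
    rw [mem_suppF, he'] at this
    exact lt_irrefl _ this

lemma walk (x : N → M → ℝ)
    (hFne : (fracSet x).Nonempty)
    (hown : ∀ b : M, ∃ a, 0 < x a b)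
    (hB' : ∀ a b, b ∈ fracSet x → 0 < x a b → ∃ b', b' ∈ fracSet x ∧ b' ≠ b ∧ 0 < x a b')
    (hTwo : ∀ b ∈ fracSet x, ∀ a, 0 < x a b → ∃ a', a' ≠ a ∧ 0 < x a' b) :
    ∃ p : ℕ → N × M, (∀ n, (p n).2 ∈ fracSet x ∧ 0 < x (p n).1 (p n).2) ∧
      (∀ n, (p (n+1)).1 ≠ (p n).1 ∧ (p (n+1)).2 ≠ (p n).2 ∧ 0 < x (p (n+1)).1 (p n).2) := by
  classical
  set P : N × M → Prop := fun e => e.2 ∈ fracSet x ∧ 0 < x e.1 e.2 with hP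
  have hstep : ∀ e : N × M, P e → ∃ e' : N × M,
      P e' ∧ e'.1 ≠ e.1 ∧ e'.2 ≠ e.2 ∧ 0 < x e'.1 e.2 := by
    rintro ⟨a, b⟩ ⟨hbF, hab⟩
    obtain ⟨a', ha'ne, ha'⟩ := hTwo b hbF a hab
    obtain ⟨b', hb'F, hb'ne, hab'⟩ := hB' a' b hbF ha'
    exact ⟨(a', b'), ⟨hb'F, hab'⟩, ha'ne, hb'ne, ha'⟩
  choose f hf1 hf2 hf3 hf4 using hstep
  obtain ⟨j0, hj0F⟩ := hFne
  obtain ⟨i0, hi0⟩ := hown j0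
  have hw0 : P (i0, j0) := ⟨hj0F, hi0⟩
  let q : ℕ → {e : N × M // P e} :=
    fun n => Nat.rec ⟨(i0, j0), hw0⟩ (fun _ w => ⟨f w.1 w.2, hf1 w.1 w.2⟩) n
  refine ⟨fun n => (q n).1, fun n => (q n).2, fun n => ?_⟩
  exact ⟨hf2 (q n).1 (q n).2, hf3 (q n).1 (q n).2, hf4 (q n).1 (q n).2⟩

lemma rotate (v : N → Finset M → NNReal) (x : N → M → ℝ)
    (hpos : ∀ i j, 0 ≤ x i j) (hcol : ∀ j, ∑ i, x i j = 1)
    (hFne : (fracSet x).Nonempty)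
    (hval : ∀ a b, b ∈ fracSet x → 0 < x a b → 0 < (v a {b} : ℝ))
    (hB' : ∀ a b, b ∈ fracSet x → 0 < x a b → ∃ b', b' ∈ fracSet x ∧ b' ≠ b ∧ 0 < x a b')
    (hTwo : ∀ b ∈ fracSet x, ∀ a, 0 < x a b → ∃ a', a' ≠ a ∧ 0 < x a' b) :
    ∃ x' : N → M → ℝ,
      (∀ a b, 0 ≤ x' a b) ∧ (∀ b, ∑ a, x' a b = 1) ∧
      (∀ a b, 0 < x' a b → 0 < x a b) ∧
      ((suppF x').card < (suppF x).card) ∧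
      (fracSet x' ⊆ fracSet x) ∧
      (∀ a, ∑ b, (v a {b} : ℝ) * x a b ≤ ∑ b, (v a {b} : ℝ) * x' a b) := by
  classical
  have hown : ∀ b : M, ∃ a, 0 < x a b := by
    intro b
    have h1 : (0:ℝ) < ∑ a, x a b := by rw [hcol]; norm_num
    have h2 : ∑ _a : N, (0:ℝ) < ∑ a, x a b := by simpa using h1
    obtain ⟨a, _, ha⟩ := Finset.exists_lt_of_sum_lt h2
    exact ⟨a, ha⟩
  obtain ⟨p, hPn, hstepn⟩ := walk x hFne hown hB' hTwo
  set I : ℕ → N := fun n => (p n).1 with hI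
  set J : ℕ → M := fun n => (p n).2 with hJ
  have hrep : ∃ t, ∃ s, s < t ∧ I s = I t := by
    obtain ⟨a, b, hab, heq⟩ := Fintype.exists_ne_map_eq_of_card_lt
      (fun r : Fin (Fintype.card N + 1) => I r) (by simp)
    rcases lt_or_gt_of_ne (fun h : (a:ℕ) = (b:ℕ) => hab (Fin.ext h)) with h | h
    · exact ⟨b, a, h, heq⟩
    · exact ⟨a, b, h, heq.symm⟩
  set t0 := Nat.find hrep with ht0def
  obtain ⟨s, hst, hIst⟩ := Nat.find_spec hrep
  rw [← ht0def] at hIst hst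
  have hinj : ∀ r r', r < r' → r' < t0 → I r ≠ I r' :=
    fun r r' h h' hEq => Nat.find_min hrep h' ⟨r, h, hEq⟩
  have hinj' : ∀ r r', r < t0 → r' < t0 → I r = I r' → r = r' := by
    intro r r' h h' hEq
    rcases lt_trichotomy r r' with hc | hc | hc
    · exact absurd hEq (hinj r r' hc h')
    · exact hc
    · exact absurd hEq.symm (hinj r' r hc h)
  have hs1t : s + 1 < t0 := by
    rcases Nat.lt_or_ge (s+1) t0 with h | h
    · exact h
    · exfalso
      have heq : t0 = s + 1 := le_antisymm h hst
      rw [heq] at hIst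
      exact (hstepn s).1 hIst.symm
  set t1 := t0 - 1 with ht1def
  have ht1 : t1 + 1 = t0 := Nat.succ_pred_eq_of_pos (Nat.lt_of_le_of_lt (Nat.zero_le s) hst)
  have hst1 : s < t1 := by omega
  have ht1lt : t1 < t0 := by omega
  set Vv : ℕ → ℝ := fun r => (v (I r) {J r} : ℝ) with hVv
  set Wv : ℕ → ℝ := fun r => (v (I (r+1)) {J r} : ℝ) with hWv
  have hVpos : ∀ r, 0 < Vv r := fun r => hval _ _ (hPn r).1 (hPn r).2
  have hWpos : ∀ r, 0 < Wv r := fun r => hval _ _ (hPn r).1 (hstepn r).2.2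
  set av : ℕ → ℝ := fun n => ∏ r ∈ Finset.Ico s n, (Wv r / Vv (r+1)) with hav
  have hapos : ∀ n, 0 < av n := fun n => Finset.prod_pos fun r _ => div_pos (hWpos r) (hVpos _)
  have has : av s = 1 := by simp [hav]
  have harec : ∀ n, s ≤ n → av (n+1) * Vv (n+1) = av n * Wv n := by
    intro n hn
    have h1 : av (n+1) = av n * (Wv n / Vv (n+1)) := by
      rw [hav]; exact Finset.prod_Ico_succ_top hn _
    rw [h1, mul_assoc, div_mul_cancel₀ _ (ne_of_gt (hVpos (n+1)))]
  set σ : ℝ := if av t1 * Wv t1 ≤ Vv s then 1 else -1 with hσ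
  set co : ℕ → ℝ := fun n => σ * av n with hco
  have hwrap : 0 ≤ co s * Vv s - co t1 * Wv t1 := by
    by_cases hC : av t1 * Wv t1 ≤ Vv s
    · simp only [hco, hσ, if_pos hC, one_mul, has]
      linarith
    · push_neg at hC
      simp only [hco, hσ, if_neg (not_le.mpr hC), has]
      nlinarith [hC]
  have hmid : ∀ n, s ≤ n → co (n+1) * Vv (n+1) - co n * Wv n = 0 := by
    intro n hn
    have h := harec n hn
    simp only [hco]
    rw [mul_assoc, mul_assoc, h, sub_self]
  set δ : N → M → ℝ := fun a m => ∑ r ∈ Finset.Ico s t0,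
    (if m = J r then co r * ((if a = I r then (1:ℝ) else 0) - (if a = I (r+1) then 1 else 0))
     else 0) with hδ
  have hδcol : ∀ m, ∑ a, δ a m = 0 := by
    intro m
    simp only [hδ]
    rw [Finset.sum_comm]
    refine Finset.sum_eq_zero fun r hr => ?_
    by_cases hm : m = J r
    · simp only [if_pos hm, ← Finset.mul_sum, Finset.sum_sub_distrib,
        Finset.sum_ite_eq', Finset.mem_univ, if_true]
      ring
    · simp [hm]
  -- the row sums against values
  have hδrowval : ∀ a, ∑ m, (v a {m} : ℝ) * δ a m = ∑ r ∈ Finset.Ico s t0,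
      (co r * ((if a = I r then (1:ℝ) else 0) - (if a = I (r+1) then 1 else 0))
        * (v a {J r} : ℝ)) := by
    intro a
    simp only [hδ, Finset.mul_sum]
    rw [Finset.sum_comm]
    refine Finset.sum_congr rfl fun r hr => ?_
    rw [Finset.sum_eq_single (J r)]
    · rw [if_pos rfl]; ring
    · intro m _ hm
      simp [hm]
    · intro h
      exact absurd (Finset.mem_univ _) h
  have hδrow : ∀ a, 0 ≤ ∑ m, (v a {m} : ℝ) * δ a m := by
    intro a
    rw [hδrowval a]
    by_cases hex : ∃ r, r ∈ Finset.Ico s t0 ∧ a = I r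
    · obtain ⟨r0, hr0mem, rfl⟩ := hex
      have hr0 := Finset.mem_Ico.mp hr0mem
      have hsplit : ∑ r ∈ Finset.Ico s t0,
          (co r * ((if I r0 = I r then (1:ℝ) else 0) - (if I r0 = I (r+1) then 1 else 0))
            * (v (I r0) {J r} : ℝ))
          = (∑ r ∈ Finset.Ico s t0, (if I r0 = I r then co r * (v (I r0) {J r} : ℝ) else 0))
          - (∑ r ∈ Finset.Ico s t0, (if I r0 = I (r+1) then co r * (v (I r0) {J r} : ℝ) else 0)) := by
        rw [← Finset.sum_sub_distrib]
        refine Finset.sum_congr rfl fun r hr => ?_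
        split_ifs <;> ring
      rw [hsplit]
      have hfirst : (∑ r ∈ Finset.Ico s t0, (if I r0 = I r then co r * (v (I r0) {J r} : ℝ) else 0))
          = co r0 * Vv r0 := by
        rw [Finset.sum_eq_single_of_mem r0 hr0mem]
        · simp [hVv]
        · intro r hrm hne
          have hr := Finset.mem_Ico.mp hrm
          rw [if_neg]
          intro hEq
          exact hne (hinj' r r0 hr.2 hr0.2 hEq.symm)
      rw [hfirst]
      rcases Nat.eq_or_lt_of_le hr0.1 with hr0s | hr0s
      · -- r0 = s : wrap constraint
        have hsecond : (∑ r ∈ Finset.Ico s t0, (if I r0 = I (r+1) then co r * (v (I r0) {J r} : ℝ) else 0))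
            = co t1 * Wv t1 := by
          rw [Finset.sum_eq_single_of_mem t1 (Finset.mem_Ico.mpr ⟨le_of_lt hst1, ht1lt⟩)]
          · rw [if_pos]
            · have hIeq : I r0 = I (t1+1) := by rw [ht1, ← hr0s]; exact hIst
              rw [hWv]
              rw [show (v (I r0) {J t1} : ℝ) = (v (I (t1+1)) {J t1} : ℝ) by rw [← hIeq]]
            · rw [ht1, ← hr0s]; exact hIst
          · intro r hrm hne
            have hr := Finset.mem_Ico.mp hrm
            rw [if_neg]
            intro hEq
            have hr1 : r + 1 < t0 := by omega
            have := hinj' r0 (r+1) hr0.2 hr1 hEq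
            omega
        rw [hsecond]
        have : co r0 = co s := by rw [hr0s]
        rw [this]
        have : Vv r0 = Vv s := by rw [hr0s]
        rw [this]
        exact hwrap
      · -- r0 > s : interior, zero
        obtain ⟨r1, rfl⟩ : ∃ r1, r0 = r1 + 1 := ⟨r0 - 1, by omega⟩
        have hr1mem : r1 ∈ Finset.Ico s t0 := Finset.mem_Ico.mpr ⟨by omega, by omega⟩
        have hsecond : (∑ r ∈ Finset.Ico s t0, (if I (r1+1) = I (r+1) then co r * (v (I (r1+1)) {J r} : ℝ) else 0))
            = co r1 * Wv r1 := by
          rw [Finset.sum_eq_single_of_mem r1 hr1mem]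
          · simp [hWv]
          · intro r hrm hne
            have hr := Finset.mem_Ico.mp hrm
            rw [if_neg]
            intro hEq
            by_cases h2 : r + 1 = t0
            · have hx2 : I (r1+1) = I s := by rw [hEq, h2, ← hIst]
              have := hinj' (r1+1) s hr0.2 (by omega) hx2
              omega
            · have := hinj' (r1+1) (r+1) hr0.2 (by omega) hEq
              omega
        rw [hsecond]
        have := hmid r1 (by omega)
        simp only [hVv] at this ⊢
        linarith [this]
    · push_neg at hex
      refine le_of_eq (Finset.sum_eq_zero fun r hr => ?_).symm
      have hr' := Finset.mem_Ico.mp hr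
      have h1 : a ≠ I r := hex r hr
      have h2 : a ≠ I (r+1) := by
        by_cases h3 : r + 1 = t0
        · rw [h3, ← hIst]
          exact hex s (Finset.mem_Ico.mpr ⟨le_refl s, hst⟩)
        · exact hex (r+1) (Finset.mem_Ico.mpr ⟨by omega, by omega⟩)
      simp [h1, h2]
  have hδsupp : ∀ a m, δ a m ≠ 0 → 0 < x a m := by
    intro a m h
    by_contra hx
    apply h
    simp only [hδ]
    refine Finset.sum_eq_zero fun r hr => ?_
    by_cases hm : m = J r
    · subst hm
      have h1 : a ≠ I r := by
        intro he; subst he; exact hx (hPn r).2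
      have h2 : a ≠ I (r+1) := by
        intro he; subst he; exact hx (hstepn r).2.2
      simp [h1, h2]
    · simp [hm]
  -- a strictly negative entry of δ exists
  have hwit : ∃ e : N × M, δ e.1 e.2 < 0 := by
    by_cases hC : av t1 * Wv t1 ≤ Vv s
    · refine ⟨(I (s+1), J s), ?_⟩
      have heval : δ (I (s+1)) (J s) = -co s := by
        simp only [hδ]
        rw [Finset.sum_eq_single_of_mem s (Finset.mem_Ico.mpr ⟨le_refl s, hst⟩)]
        · have h1 : I (s+1) ≠ I s := (hstepn s).1
          simp [h1]
        · intro r hrm hne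
          have hr := Finset.mem_Ico.mp hrm
          by_cases hm : J s = J r
          · rw [if_pos hm]
            have h1 : I (s+1) ≠ I r := by
              intro hEq
              have := hinj' (s+1) r hs1t hr.2 hEq
              subst this
              exact (hstepn s).2.1 hm.symm
            have h2 : I (s+1) ≠ I (r+1) := by
              intro hEq
              by_cases h3 : r + 1 = t0
              · rw [h3, ← hIst] at hEq
                have := hinj' (s+1) s hs1t (by omega) hEq
                omega
              · have := hinj' (s+1) (r+1) hs1t (by omega) hEq
                omega
            simp [h1, h2]
          · simp [hm]
      rw [heval]
      simp only [hco, hσ, if_pos hC, has]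
      norm_num
    · refine ⟨(I (s+1), J (s+1)), ?_⟩
      have heval : δ (I (s+1)) (J (s+1)) = co (s+1) := by
        simp only [hδ]
        rw [Finset.sum_eq_single_of_mem (s+1) (Finset.mem_Ico.mpr ⟨by omega, hs1t⟩)]
        · have h1 : I (s+1) ≠ I (s+1+1) := (hstepn (s+1)).1.symm
          simp [h1]
        · intro r hrm hne
          have hr := Finset.mem_Ico.mp hrm
          by_cases hm : J (s+1) = J r
          · rw [if_pos hm]
            have h1 : I (s+1) ≠ I r := by
              intro hEq
              exact hne (hinj' r (s+1) hr.2 hs1t hEq.symm)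
            have h2 : I (s+1) ≠ I (r+1) := by
              intro hEq
              by_cases h3 : r + 1 = t0
              · rw [h3, ← hIst] at hEq
                have := hinj' (s+1) s hs1t (by omega) hEq
                omega
              · have heq2 := hinj' (s+1) (r+1) hs1t (by omega) hEq
                have hrs : r = s := by omega
                rw [hrs] at hm
                exact (hstepn s).2.1 hm
            simp [h1, h2]
          · simp [hm]
      rw [heval]
      simp only [hco, hσ, if_neg hC]
      have := hapos (s+1)
      nlinarith [this]
  -- scaling factor
  set S : Finset (N × M) :=
    Finset.univ.filter (fun e => δ e.1 e.2 < 0) with hS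
  have hmemS : ∀ e : N × M, e ∈ S ↔ δ e.1 e.2 < 0 := by intro e; simp [hS]
  have hSne : S.Nonempty := by
    obtain ⟨e, he⟩ := hwit
    exact ⟨e, (hmemS e).mpr he⟩
  set c := S.inf' hSne (fun e => x e.1 e.2 / (-(δ e.1 e.2))) with hc
  have hcpos : 0 < c := by
    rw [hc, Finset.lt_inf'_iff]
    intro e he
    rw [hmemS] at he
    exact div_pos (hδsupp _ _ (ne_of_lt he)) (by linarith)
  obtain ⟨estar, hestarS, hestar⟩ := Finset.exists_mem_eq_inf' hSne (fun e => x e.1 e.2 / (-(δ e.1 e.2)))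
  set x' : N → M → ℝ := fun a m => x a m + c * δ a m with hx'
  have h1 : ∀ a m, 0 < x' a m → 0 < x a m := by
    intro a m h
    by_cases hd : δ a m = 0
    · simp only [hx', hd, mul_zero, add_zero] at h; exact h
    · exact hδsupp a m hd
  have hnn : ∀ a m, 0 ≤ x' a m := by
    intro a m
    rcases lt_trichotomy (δ a m) 0 with hd | hd | hd
    · have hcle : c ≤ x a m / (-(δ a m)) := by
        rw [hc]
        exact Finset.inf'_le _ ((hmemS (a, m)).mpr hd)
      have hpos' : (0:ℝ) < -δ a m := by linarith
      have h2 : c * (-δ a m) ≤ x a m := (le_div_iff₀ hpos').mp hcle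
      simp only [hx']
      nlinarith [h2]
    · simp only [hx', hd, mul_zero, add_zero]; exact hpos a m
    · simp only [hx']
      nlinarith [mul_pos hcpos hd, hpos a m]
  have hzero : x' estar.1 estar.2 = 0 := by
    have hd : δ estar.1 estar.2 < 0 := (hmemS estar).mp hestarS
    have hδne : δ estar.1 estar.2 ≠ 0 := ne_of_lt hd
    have hceq : c = x estar.1 estar.2 / (-δ estar.1 estar.2) := by rw [hc, hestar]
    have key : x estar.1 estar.2 / -δ estar.1 estar.2 * δ estar.1 estar.2
        = - x estar.1 estar.2 := by
      rw [div_neg, neg_mul, div_mul_cancel₀ _ hδne]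
    simp only [hx', hceq]
    rw [key]
    ring
  refine ⟨x', hnn, ?_, h1, ?_, ?_, ?_⟩
  · intro m
    simp only [hx']
    rw [Finset.sum_add_distrib, hcol m, ← Finset.mul_sum, hδcol m]
    ring
  · exact suppF_card_lt h1 (e := estar) (hδsupp _ _ (ne_of_lt ((hmemS estar).mp hestarS))) hzero
  · -- fracSet mono
    intro m hm
    rw [mem_fracSet] at hm ⊢
    intro ⟨a, ha⟩
    apply hm
    have hδ0 : ∀ a', δ a' m = 0 := by
      intro a'
      simp only [hδ]
      refine Finset.sum_eq_zero fun r hr => ?_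
      rw [if_neg]
      intro hEq
      -- m = J r would put m in fracSet x, contradicting existence of a with x a m = 1
      have hmF : m ∈ fracSet x := hEq ▸ (hPn r).1
      rw [mem_fracSet] at hmF
      exact hmF ⟨a, ha⟩
    exact ⟨a, by simp only [hx', hδ0 a, mul_zero, add_zero]; exact ha⟩
  · intro a
    simp only [hx', mul_add, Finset.sum_add_distrib]
    have h2 : ∑ m, (v a {m} : ℝ) * (c * δ a m) = c * ∑ m, (v a {m} : ℝ) * δ a m := by
      rw [Finset.mul_sum]
      refine Finset.sum_congr rfl fun m _ => by ring
    rw [h2]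
    nlinarith [mul_nonneg (le_of_lt hcpos) (hδrow a)]

def mxF (v : Finset M → NNReal) (x : N → M → ℝ) (i : N) : NNReal :=
  (Finset.univ.filter fun j => 0 < x i j ∧ j ∈ fracSet x).sup fun j => v {j}

lemma mxF_mono (v : Finset M → NNReal) {x x' : N → M → ℝ}
    (h1 : ∀ a b, 0 < x' a b → 0 < x a b) (h2 : fracSet x' ⊆ fracSet x) (a : N) :
    mxF v x' a ≤ mxF v x a := by
  apply Finset.sup_mono
  intro b hb
  simp only [Finset.mem_filter, Finset.mem_univ, true_and] at *
  exact ⟨h1 _ _ hb.1, h2 hb.2⟩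

lemma base (v : N → Finset M → NNReal) (x : N → M → ℝ)
    (hpos : ∀ i j, 0 ≤ x i j) (hcol : ∀ j, ∑ i, x i j = 1)
    (hint : ∀ j, ∃ i, x i j = 1) :
    ∃ Z : N → Finset M, (∀ j : M, ∃! i, j ∈ Z i) ∧
      ∀ i, (∑ j, (v i {j} : ℝ) * x i j) - (mxF (v i) x i : ℝ) ≤ ∑ j ∈ Z i, (v i {j} : ℝ) := by
  classical
  refine ⟨fun i => Finset.univ.filter fun j => x i j = 1, ?_, ?_⟩
  · intro j
    obtain ⟨i, hi⟩ := hint j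
    refine ⟨i, by simp [hi], ?_⟩
    intro i' hi'
    simp only [Finset.mem_filter, Finset.mem_univ, true_and] at hi'
    by_contra hne
    have h2 : x i' j + x i j ≤ ∑ a, x a j := by
      have hsub : ({i', i} : Finset N) ⊆ Finset.univ := Finset.subset_univ _
      have := Finset.sum_le_sum_of_subset_of_nonneg hsub (fun a _ _ => hpos a j)
      rwa [Finset.sum_pair hne] at this
    rw [hcol j, hi, hi'] at h2; linarith
  · intro i
    have hsum : (∑ j, (v i {j} : ℝ) * x i j)
        = ∑ j ∈ Finset.univ.filter (fun j => x i j = 1), (v i {j} : ℝ) := by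
      rw [Finset.sum_filter]
      refine Finset.sum_congr rfl fun j _ => ?_
      by_cases h : x i j = 1
      · simp [h]
      · obtain ⟨i', hi'⟩ := hint j
        have hne : i ≠ i' := fun he => h (he ▸ hi')
        have hzero : x i j = 0 := by
          have h1 : x i' j + ∑ a ∈ Finset.univ.erase i', x a j = 1 := by
            rw [Finset.add_sum_erase Finset.univ (fun a => x a j) (Finset.mem_univ i'), hcol j]
          rw [hi'] at h1
          have h2 : ∑ a ∈ Finset.univ.erase i', x a j = 0 := by linarith
          have := (Finset.sum_eq_zero_iff_of_nonneg (fun a _ => hpos a j)).mp h2 i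
            (Finset.mem_erase.mpr ⟨hne, Finset.mem_univ i⟩)
          exact this
        simp [h, hzero]
    rw [hsum]
    have hm : (0:ℝ) ≤ (mxF (v i) x i : ℝ) := NNReal.coe_nonneg _
    linarith

lemma transfer (x : N → M → ℝ) (hpos : ∀ i j, 0 ≤ x i j) (hcol : ∀ j, ∑ i, x i j = 1)
    (i i' : N) (j : M) (hne : i' ≠ i) (hxi : 0 < x i j) (hxi' : 0 < x i' j)
    (hjF : j ∈ fracSet x) :
    ∃ x' : N → M → ℝ,
      (∀ a b, 0 ≤ x' a b) ∧ (∀ b, ∑ a, x' a b = 1) ∧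
      (∀ a b, 0 < x' a b → 0 < x a b) ∧
      ((suppF x').card < (suppF x).card) ∧
      (fracSet x' ⊆ fracSet x) ∧
      (∀ a, a ≠ i → ∀ b, x a b ≤ x' a b) ∧
      (∀ b, x' i b = if b = j then 0 else x i b) := by
  classical
  set x' : N → M → ℝ := fun a b =>
    if a = i ∧ b = j then 0 else if a = i' ∧ b = j then x i' j + x i j else x a b with hx'
  have hrow : ∀ b, x' i b = if b = j then 0 else x i b := by
    intro b
    by_cases hb : b = j
    · simp [hx', hb]
    · simp [hx', hb]
  have hoff : ∀ a b, a ≠ i → a ≠ i' → x' a b = x a b := by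
    intro a b ha ha'
    simp [hx', ha, ha']
  have hii' : ∀ b, b ≠ j → ∀ a, x' a b = x a b := by
    intro b hb a; simp [hx', hb]
  have hi'row : ∀ b, x' i' b = if b = j then x i' j + x i j else x i' b := by
    intro b
    by_cases hb : b = j
    · simp [hx', hb, hne]
    · simp [hx', hb]
  have h1 : ∀ a b, 0 < x' a b → 0 < x a b := by
    intro a b h
    by_cases hb : b = j
    · subst hb
      by_cases ha : a = i
      · subst ha; rw [hrow] at h; simp at h
      · by_cases ha' : a = i'
        · subst ha'; exact hxi'
        · rwa [hoff a b ha ha'] at h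
    · rwa [hii' b hb a] at h
  have hnn : ∀ a b, 0 ≤ x' a b := by
    intro a b
    by_cases hb : b = j
    · subst hb
      by_cases ha : a = i
      · subst ha; rw [hrow]; simp
      · by_cases ha' : a = i'
        · subst ha'; rw [hi'row]; simp; positivity
        · rw [hoff a _ ha ha']; exact hpos a _
    · rw [hii' b hb a]; exact hpos a b
  refine ⟨x', hnn, ?_, h1, ?_, ?_, ?_, hrow⟩
  · -- column sums
    intro b
    by_cases hb : b = j
    · subst hb
      have hsub : ({i, i'} : Finset N) ⊆ Finset.univ := Finset.subset_univ _
      have hps : (i : N) ≠ i' := hne.symm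
      rw [← Finset.sum_sdiff hsub]
      have e1 : ∑ a ∈ Finset.univ \ {i, i'}, x' a b = ∑ a ∈ Finset.univ \ {i, i'}, x a b := by
        refine Finset.sum_congr rfl fun a ha => ?_
        simp only [Finset.mem_sdiff, Finset.mem_insert, Finset.mem_singleton] at ha
        exact hoff a b (fun h => ha.2 (Or.inl h)) (fun h => ha.2 (Or.inr h))
      have e2 : ∑ a ∈ ({i, i'} : Finset N), x' a b = ∑ a ∈ ({i, i'} : Finset N), x a b := by
        rw [Finset.sum_pair hps, Finset.sum_pair hps, hrow, hi'row]
        simp; ring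
      have hc := hcol b
      rw [← Finset.sum_sdiff hsub (f := fun a => x a b)] at hc
      rw [e1, e2]
      exact hc
    · have : ∀ a, x' a b = x a b := hii' b hb
      rw [Finset.sum_congr rfl fun a _ => this a]
      exact hcol b
  · exact suppF_card_lt h1 (e := (i, j)) hxi (by rw [hrow]; simp)
  · intro b hb
    rw [mem_fracSet] at *
    intro ⟨a, ha⟩
    by_cases hbj : b = j
    · subst hbj
      exact hjF ⟨a, ha⟩
    · apply hb
      exact ⟨a, by rw [hii' b hbj a]; exact ha⟩
  · intro a ha b
    by_cases ha' : a = i'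
    · subst ha'
      rw [hi'row]
      by_cases hb : b = j
      · subst hb; simp; linarith
      · simp [hb]
    · rw [hoff a b ha ha']


lemma mxF_eq_zero {v : Finset M → NNReal} {x : N → M → ℝ} {i : N}
    (h : ∀ j, 0 < x i j → j ∈ fracSet x → False) : mxF v x i = 0 := by
  have hemp : (Finset.univ.filter fun j => 0 < x i j ∧ j ∈ fracSet x) = ∅ := by
    rw [Finset.eq_empty_iff_forall_notMem]
    intro j hj
    exact h j (Finset.mem_filter.mp hj).2.1 (Finset.mem_filter.mp hj).2.2
  unfold mxF
  rw [hemp]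
  simp

lemma key (v : N → Finset M → NNReal) :
    ∀ (k : ℕ) (x : N → M → ℝ), (suppF x).card ≤ k →
    (∀ i j, 0 ≤ x i j) → (∀ j, ∑ i, x i j = 1) →
    ∃ Z : N → Finset M, (∀ j : M, ∃! i, j ∈ Z i) ∧
      ∀ i, (∑ j, (v i {j} : ℝ) * x i j) - (mxF (v i) x i : ℝ) ≤ ∑ j ∈ Z i, (v i {j} : ℝ) := by
  intro k
  induction k with
  | zero =>
    intro x hcard hpos hcol
    apply base v x hpos hcol
    intro j
    have hsupp : suppF x = ∅ := Finset.card_eq_zero.mp (Nat.le_zero.mp hcard)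
    have hz : ∀ a, x a j = 0 := by
      intro a
      by_contra hne
      have hpos' : 0 < x a j := lt_of_le_of_ne (hpos a j) (Ne.symm hne)
      have hmem : (a, j) ∈ suppF x := mem_suppF.mpr hpos'
      rw [hsupp] at hmem
      exact absurd hmem (Finset.notMem_empty _)
    have h1 := hcol j
    rw [Finset.sum_eq_zero (fun a _ => hz a)] at h1
    exact absurd h1 (by norm_num)
  | succ k IH =>
    intro x hcard hpos hcol
    by_cases hint : ∀ j, ∃ a, x a j = 1
    · exact base v x hpos hcol hint
    · have hFne : (fracSet x).Nonempty := by
        push_neg at hint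
        obtain ⟨j, hj⟩ := hint
        exact ⟨j, mem_fracSet.mpr (by push_neg; intro a; exact hj a)⟩
      have hle1 : ∀ a b, x a b ≤ 1 := by
        intro a b
        calc x a b ≤ ∑ a', x a' b :=
              Finset.single_le_sum (fun a' _ => hpos a' b) (Finset.mem_univ a)
        _ = 1 := hcol b
      have hTwo : ∀ b ∈ fracSet x, ∀ a, 0 < x a b → ∃ a', a' ≠ a ∧ 0 < x a' b := by
        intro b hbF a hab
        have hlt : x a b < 1 := lt_of_le_of_ne (hle1 a b) (fun h => (mem_fracSet.mp hbF) ⟨a, h⟩)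
        have hadd : x a b + ∑ a' ∈ Finset.univ.erase a, x a' b = 1 := by
          rw [Finset.add_sum_erase Finset.univ (fun a' => x a' b) (Finset.mem_univ a), hcol b]
        have hsum : 0 < ∑ a' ∈ Finset.univ.erase a, x a' b := by linarith
        have h0 : ∑ _a' ∈ Finset.univ.erase a, (0:ℝ) < ∑ a' ∈ Finset.univ.erase a, x a' b := by
          rw [Finset.sum_const_zero]; exact hsum
        obtain ⟨a', ha'mem, ha'⟩ := Finset.exists_lt_of_sum_lt h0
        exact ⟨a', (Finset.mem_erase.mp ha'mem).1, ha'⟩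
      have huival : ∀ (x' : N → M → ℝ) (i : N) (j : M),
          (∀ b, x' i b = if b = j then 0 else x i b) →
          ∑ b, (v i {b} : ℝ) * x' i b = (∑ b, (v i {b} : ℝ) * x i b) - (v i {j} : ℝ) * x i j := by
        intro x' i j hrowi
        rw [← Finset.add_sum_erase _ (fun b => (v i {b}:ℝ) * x' i b) (Finset.mem_univ j),
            ← Finset.add_sum_erase _ (fun b => (v i {b}:ℝ) * x i b) (Finset.mem_univ j)]
        have he : ∑ b ∈ Finset.univ.erase j, (v i {b}:ℝ) * x' i b
            = ∑ b ∈ Finset.univ.erase j, (v i {b}:ℝ) * x i b :=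
          Finset.sum_congr rfl fun b hb => by rw [hrowi b, if_neg (Finset.mem_erase.mp hb).1]
        rw [he, hrowi j]
        simp only [eq_self_iff_true, if_true, mul_zero]
        ring
      by_cases hA : ∃ e : N × M, e.2 ∈ fracSet x ∧ 0 < x e.1 e.2 ∧ v e.1 {e.2} = 0
      · obtain ⟨⟨i, j⟩, hjF, hxij, hv0⟩ := hA
        dsimp only at hjF hxij hv0
        obtain ⟨i', hi'ne, hxi'⟩ := hTwo j hjF i hxij
        obtain ⟨x', hnn, hcol', hsuppm, hcardlt, hfrac, hmono, hrowi⟩ :=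
          transfer x hpos hcol i i' j hi'ne hxij hxi' hjF
        obtain ⟨Z, hZpart, hZ⟩ := IH x' (by omega) hnn hcol'
        refine ⟨Z, hZpart, fun a => ?_⟩
        have hm : (mxF (v a) x' a : ℝ) ≤ (mxF (v a) x a : ℝ) :=
          NNReal.coe_le_coe.mpr (mxF_mono (v a) hsuppm hfrac a)
        by_cases ha : a = i
        · subst ha
          have hui := huival x' a j hrowi
          have hvz : (v a {j} : ℝ) = 0 := by rw [hv0]; simp
          rw [hvz, zero_mul, sub_zero] at hui
          have hb := hZ a
          rw [hui] at hb
          linarith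
        · have hu : ∑ b, (v a {b} : ℝ) * x a b ≤ ∑ b, (v a {b} : ℝ) * x' a b :=
            Finset.sum_le_sum fun b _ =>
              mul_le_mul_of_nonneg_left (hmono a ha b) (NNReal.coe_nonneg _)
          linarith [hZ a, hm, hu]
      · by_cases hBc : ∃ e : N × M, e.2 ∈ fracSet x ∧ 0 < x e.1 e.2 ∧
            ∀ b ∈ fracSet x, b ≠ e.2 → x e.1 b ≤ 0
        · obtain ⟨⟨i, j⟩, hjF, hxij, honly⟩ := hBc
          dsimp only at hjF hxij honly
          obtain ⟨i', hi'ne, hxi'⟩ := hTwo j hjF i hxij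
          obtain ⟨x', hnn, hcol', hsuppm, hcardlt, hfrac, hmono, hrowi⟩ :=
            transfer x hpos hcol i i' j hi'ne hxij hxi' hjF
          obtain ⟨Z, hZpart, hZ⟩ := IH x' (by omega) hnn hcol'
          refine ⟨Z, hZpart, fun a => ?_⟩
          by_cases ha : a = i
          · subst ha
            have hmx0 : mxF (v a) x' a = 0 := by
              apply mxF_eq_zero
              intro b hb hbF'
              have hbj : b ≠ j := by
                intro hbj
                rw [hbj, hrowi j, if_pos rfl] at hb
                exact lt_irrefl _ hb
              have hxb : 0 < x a b := hsuppm a b hb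
              exact absurd (honly b (hfrac hbF') hbj) (not_le.mpr hxb)
            have hui := huival x' a j hrowi
            have hvj : (v a {j} : ℝ) * x a j ≤ (mxF (v a) x a : ℝ) := by
              have h1 : (v a {j}:ℝ) * x a j ≤ (v a {j}:ℝ) := by
                nlinarith [hle1 a j, NNReal.coe_nonneg (v a {j}), hxij]
              have h2 : v a {j} ≤ mxF (v a) x a := by
                unfold mxF
                exact Finset.le_sup (f := fun b => v a {b})
                  (Finset.mem_filter.mpr ⟨Finset.mem_univ j, hxij, hjF⟩)
              exact le_trans h1 (NNReal.coe_le_coe.mpr h2)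
            have hb := hZ a
            rw [hui, hmx0] at hb
            simp only [NNReal.coe_zero, sub_zero] at hb
            linarith
          · have hu : ∑ b, (v a {b} : ℝ) * x a b ≤ ∑ b, (v a {b} : ℝ) * x' a b :=
              Finset.sum_le_sum fun b _ =>
                mul_le_mul_of_nonneg_left (hmono a ha b) (NNReal.coe_nonneg _)
            have hm : (mxF (v a) x' a : ℝ) ≤ (mxF (v a) x a : ℝ) :=
              NNReal.coe_le_coe.mpr (mxF_mono (v a) hsuppm hfrac a)
            linarith [hZ a, hm, hu]
        · have hval : ∀ a b, b ∈ fracSet x → 0 < x a b → 0 < (v a {b} : ℝ) := by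
            intro a b hbF hab
            by_contra h
            apply hA
            refine ⟨(a, b), hbF, hab, ?_⟩
            have h1 : (v a {b} : ℝ) = 0 := le_antisymm (not_lt.mp h) (NNReal.coe_nonneg _)
            exact_mod_cast h1
          have hB' : ∀ a b, b ∈ fracSet x → 0 < x a b →
              ∃ b', b' ∈ fracSet x ∧ b' ≠ b ∧ 0 < x a b' := by
            intro a b hbF hab
            by_contra h
            push_neg at h
            exact hBc ⟨(a, b), hbF, hab, fun b' hb'F hb'ne => h b' hb'F hb'ne⟩
          obtain ⟨x', hnn, hcol', hsuppm, hcardlt, hfrac, hvalmono⟩ :=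
            rotate v x hpos hcol hFne hval hB' hTwo
          obtain ⟨Z, hZpart, hZ⟩ := IH x' (by omega) hnn hcol'
          refine ⟨Z, hZpart, fun a => ?_⟩
          have hm : (mxF (v a) x' a : ℝ) ≤ (mxF (v a) x a : ℝ) :=
            NNReal.coe_le_coe.mpr (mxF_mono (v a) hsuppm hfrac a)
          linarith [hZ a, hvalmono a, hm]

end Stmt2Aux
end


/-- integral allocation losing a `(1-ε)` factor when all items are small,
additive valuations. -/
theorem stmt2 {N M : Type*} [Fintype N] [Fintype M] [DecidableEq M]
    (v : N → Finset M → NNReal) (hv : ∀ i, IsAdditive (v i))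
    (x : N → M → ℝ) (hx : IsFracAlloc x)
    (ε : ℝ) (hε0 : 0 < ε) (hε1 : ε < 1)
    (hsmall : ∀ i, (maxOnSupport (v i) (x i) : ℝ) ≤ ε * ∑ j, (v i {j} : ℝ) * x i j) :
    ∃ Z : N → Finset M, IsPartition Z ∧
      ∀ i, (1 - ε) * (∑ j, (v i {j} : ℝ) * x i j) ≤ (v i (Z i) : ℝ) := by
  classical
  obtain ⟨Z, hZpart, hbound⟩ := Stmt2Aux.key v (Stmt2Aux.suppF x).card x le_rfl
    (fun i j => (hx.1 i j).1) hx.2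
  refine ⟨Z, hZpart, fun i => ?_⟩
  have h1 : (v i (Z i) : ℝ) = ∑ j ∈ Z i, (v i {j} : ℝ) := by
    rw [hv i (Z i)]
    push_cast
    rfl
  have h2 : (Stmt2Aux.mxF (v i) x i : ℝ) ≤ (maxOnSupport (v i) (x i) : ℝ) := by
    apply NNReal.coe_le_coe.mpr
    apply Finset.sup_mono
    intro j hj
    rw [Finset.mem_filter] at hj ⊢
    exact ⟨hj.1, hj.2.1⟩
  have h4 := hsmall i
  have h5 := hbound i
  rw [h1]
  linarith
end

section
/- Let every agent i ∈ N have a monotone, submodular, normalized valuation v_i : 2^M → ℝ≥0, and let x be a fractional allocation of the items M to the agents N. Then there exists a fractional allocation x' such that (i) the allocation graph G_{x'} is acyclic, and (ii) for every agent i, V_i(x'_i) ≥ V_i(x_i), where V_i is the multilinear extension of v_i. -/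
open Finset

namespace Cyc

variable {M : Type*} [Fintype M] [DecidableEq M]
set_option linter.unusedSectionVars false

/-- weight of subset `T` within ground set `s`. -/
def wgt (y : M → ℝ) (s T : Finset M) : ℝ :=
  (∏ m ∈ T, y m) * ∏ m ∈ s \ T, (1 - y m)

/-- generic multilinear-type sum. -/
def EE (g : Finset M → ℝ) (s : Finset M) (y : M → ℝ) : ℝ :=
  ∑ T ∈ s.powerset, g T * wgt y s T

lemma mlExt_eq_EE (v : Finset M → NNReal) (y : M → ℝ) :
    mlExt v y = EE (fun T => (v T : ℝ)) univ y := by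
  rw [mlExt, EE]
  rw [Finset.powerset_univ]
  refine Finset.sum_congr rfl fun S _ => ?_
  rw [wgt, Finset.compl_eq_univ_sdiff]

lemma wgt_nonneg {y : M → ℝ} (hy : ∀ m, 0 ≤ y m ∧ y m ≤ 1) (s T : Finset M) :
    0 ≤ wgt y s T := by
  apply mul_nonneg
  · exact Finset.prod_nonneg fun m _ => (hy m).1
  · exact Finset.prod_nonneg fun m _ => by linarith [(hy m).2]

lemma sum_powerset_split {j : M} {s : Finset M} (hj : j ∈ s) (f : Finset M → ℝ) :
    ∑ T ∈ s.powerset, f T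
      = ∑ T ∈ (s.erase j).powerset, (f T + f (insert j T)) := by
  conv_lhs => rw [← Finset.insert_erase hj,
    Finset.sum_powerset_insert (Finset.notMem_erase j s)]
  rw [Finset.sum_add_distrib]

lemma wgt_split_left {y : M → ℝ} {j : M} {s T : Finset M} (hj : j ∈ s)
    (hT : T ∈ (s.erase j).powerset) :
    wgt y s T = (1 - y j) * wgt y (s.erase j) T := by
  have hjT : j ∉ T := fun h => Finset.notMem_erase j s (Finset.mem_powerset.1 hT h)
  have : s \ T = insert j ((s.erase j) \ T) := by
    ext a
    simp only [Finset.mem_sdiff, Finset.mem_insert, Finset.mem_erase]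
    constructor
    · rintro ⟨ha, haT⟩
      by_cases h : a = j
      · exact Or.inl h
      · exact Or.inr ⟨⟨h, ha⟩, haT⟩
    · rintro (rfl | ⟨⟨h, ha⟩, haT⟩)
      · exact ⟨hj, hjT⟩
      · exact ⟨ha, haT⟩
  rw [wgt, wgt, this, Finset.prod_insert (by simp [hjT])]
  ring

lemma wgt_split_right {y : M → ℝ} {j : M} {s T : Finset M} (hj : j ∈ s)
    (hT : T ∈ (s.erase j).powerset) :
    wgt y s (insert j T) = y j * wgt y (s.erase j) T := by
  have hjT : j ∉ T := fun h => Finset.notMem_erase j s (Finset.mem_powerset.1 hT h)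
  have h1 : s \ insert j T = (s.erase j) \ T := by
    ext a
    simp only [Finset.mem_sdiff, Finset.mem_insert, Finset.mem_erase]
    tauto
  rw [wgt, wgt, h1, Finset.prod_insert hjT]
  ring

lemma wgt_update {y : M → ℝ} {j : M} {s T : Finset M} (hjs : j ∉ s) (hjT : j ∉ T)
    (c : ℝ) : wgt (Function.update y j c) s T = wgt y s T := by
  rw [wgt, wgt]
  congr 1
  · refine Finset.prod_congr rfl fun m hm => ?_
    have : m ≠ j := fun h => hjT (h ▸ hm)
    exact Function.update_of_ne this _ _
  · refine Finset.prod_congr rfl fun m hm => ?_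
    have : m ≠ j := fun h => hjs (h ▸ (Finset.mem_sdiff.1 hm).1)
    rw [Function.update_of_ne this]

/-- Workhorse: peeling one coordinate off `EE`. -/
lemma EE_update (g : Finset M → ℝ) {j : M} {s : Finset M} (hj : j ∈ s) (y : M → ℝ) (c : ℝ) :
    EE g s (Function.update y j c)
      = EE (fun T => (1 - c) * g T + c * g (insert j T)) (s.erase j) y := by
  rw [EE, sum_powerset_split hj]
  rw [EE]
  refine Finset.sum_congr rfl fun T hT => ?_
  have hjT : j ∉ T := fun h => Finset.notMem_erase j s (Finset.mem_powerset.1 hT h)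
  have e1 : wgt (Function.update y j c) s T = (1 - c) * wgt y (s.erase j) T := by
    rw [wgt_split_left hj hT]
    rw [Function.update_self]
    congr 1
    exact wgt_update (Finset.notMem_erase j s) hjT c
  have e2 : wgt (Function.update y j c) s (insert j T) = c * wgt y (s.erase j) T := by
    rw [wgt_split_right hj hT, Function.update_self]
    congr 1
    exact wgt_update (Finset.notMem_erase j s) hjT c
  rw [e1, e2]
  ring

/-- the (discrete) marginal of item `j`. -/
def marg (v : Finset M → NNReal) (j : M) (y : M → ℝ) : ℝ :=
  EE (fun T => (v (insert j T) : ℝ) - (v T : ℝ)) (univ.erase j) y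

lemma EE_sub (g h : Finset M → ℝ) (s : Finset M) (y : M → ℝ) :
    EE (fun T => g T - h T) s y = EE g s y - EE h s y := by
  rw [EE, EE, EE, ← Finset.sum_sub_distrib]
  exact Finset.sum_congr rfl fun T _ => by ring

/-- mlExt is affine in each coordinate, with slope `marg`. -/
lemma mlExt_update (v : Finset M → NNReal) (y : M → ℝ) (j : M) (c : ℝ) :
    mlExt v (Function.update y j c) = mlExt v y + (c - y j) * marg v j y := by
  have base : ∀ d : ℝ, mlExt v (Function.update y j d)
      = EE (fun T => (1 - d) * (v T : ℝ) + d * (v (insert j T) : ℝ)) (univ.erase j) y :=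
    fun d => by rw [mlExt_eq_EE, EE_update _ (Finset.mem_univ j)]
  have hy : mlExt v y = EE (fun T => (1 - y j) * (v T : ℝ) + y j * (v (insert j T) : ℝ))
      (univ.erase j) y := by
    conv_lhs => rw [← Function.update_eq_self j y]
    exact base (y j)
  rw [base c, hy, marg]
  rw [EE, EE, EE, Finset.mul_sum, ← Finset.sum_add_distrib]
  exact Finset.sum_congr rfl fun T _ => by ring


lemma EE_nonneg {g : Finset M → ℝ} {s : Finset M} (hg : ∀ T ⊆ s, 0 ≤ g T) {y : M → ℝ}
    (hy : ∀ m, 0 ≤ y m ∧ y m ≤ 1) : 0 ≤ EE g s y :=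
  Finset.sum_nonneg fun T hT =>
    mul_nonneg (hg T (Finset.mem_powerset.1 hT)) (wgt_nonneg hy s T)

lemma EE_nonpos {g : Finset M → ℝ} {s : Finset M} (hg : ∀ T ⊆ s, g T ≤ 0) {y : M → ℝ}
    (hy : ∀ m, 0 ≤ y m ∧ y m ≤ 1) : EE g s y ≤ 0 :=
  Finset.sum_nonpos fun T hT =>
    mul_nonpos_of_nonpos_of_nonneg (hg T (Finset.mem_powerset.1 hT)) (wgt_nonneg hy s T)

lemma marg_nonneg {v : Finset M → NNReal} (hmono : ∀ A B : Finset M, A ⊆ B → v A ≤ v B)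
    {y : M → ℝ} (hy : ∀ m, 0 ≤ y m ∧ y m ≤ 1) (j : M) : 0 ≤ marg v j y := by
  refine EE_nonneg (fun T _ => ?_) hy
  have := hmono T (insert j T) (Finset.subset_insert j T)
  have : (v T : ℝ) ≤ (v (insert j T) : ℝ) := by exact_mod_cast this
  linarith

/-- cross second-difference coefficient. -/
def crossE (v : Finset M → NNReal) (g l : M) (y : M → ℝ) : ℝ :=
  EE (fun T => ((v (insert l (insert g T)) : ℝ) - (v (insert g T) : ℝ))
      - ((v (insert l T) : ℝ) - (v T : ℝ))) ((univ.erase l).erase g) y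

/-- `marg` of `l` is affine in coordinate `g`, with slope `crossE`. -/
lemma marg_update {v : Finset M → NNReal} {g l : M} (hgl : g ≠ l) (y : M → ℝ) (p : ℝ) :
    marg v l (Function.update y g p) = marg v l y + (p - y g) * crossE v g l y := by
  have hg : g ∈ univ.erase l := Finset.mem_erase.2 ⟨hgl, Finset.mem_univ g⟩
  have base : ∀ d : ℝ, marg v l (Function.update y g d)
      = EE (fun T => (1 - d) * ((v (insert l T) : ℝ) - (v T : ℝ))
          + d * ((v (insert l (insert g T)) : ℝ) - (v (insert g T) : ℝ)))
        ((univ.erase l).erase g) y := fun d => by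
    rw [marg, EE_update _ hg]
  have hyy : marg v l y
      = EE (fun T => (1 - y g) * ((v (insert l T) : ℝ) - (v T : ℝ))
          + y g * ((v (insert l (insert g T)) : ℝ) - (v (insert g T) : ℝ)))
        ((univ.erase l).erase g) y := by
    conv_lhs => rw [← Function.update_eq_self g y]
    exact base (y g)
  rw [base p, hyy, crossE]
  rw [EE, EE, EE, Finset.mul_sum, ← Finset.sum_add_distrib]
  exact Finset.sum_congr rfl fun T _ => by ring

lemma crossE_nonpos {v : Finset M → NNReal}
    (hsub : ∀ A B : Finset M, v (A ∪ B) + v (A ∩ B) ≤ v A + v B)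
    {g l : M} (hgl : g ≠ l) {y : M → ℝ} (hy : ∀ m, 0 ≤ y m ∧ y m ≤ 1) :
    crossE v g l y ≤ 0 := by
  refine EE_nonpos (fun T hT => ?_) hy
  have hgT : g ∉ T := fun h =>
    Finset.notMem_erase g (univ.erase l) (hT h)
  have hlT : l ∉ T := fun h =>
    Finset.notMem_erase l univ (Finset.erase_subset g (univ.erase l) (hT h))
  have hu : insert g T ∪ insert l T = insert l (insert g T) := by
    ext a; simp only [Finset.mem_union, Finset.mem_insert]; tauto
  have hi : insert g T ∩ insert l T = T := by
    ext a
    simp only [Finset.mem_inter, Finset.mem_insert]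
    constructor
    · rintro ⟨h1 | h1, h2 | h2⟩
      · subst h1; exact absurd h2 hgl
      · subst h1; exact absurd h2 hgT
      · subst h2; exact absurd h1 hlT
      · exact h1
    · intro h; exact ⟨Or.inr h, Or.inr h⟩
  have hsub' := hsub (insert g T) (insert l T)
  rw [hu, hi] at hsub'
  have : ((v (insert l (insert g T)) : ℝ) + (v T : ℝ))
      ≤ (v (insert g T) : ℝ) + (v (insert l T) : ℝ) := by exact_mod_cast hsub'
  linarith

/-- Main per-agent estimate: receive `a` on `g`, shed `s` on `l`. -/
lemma main_delta {v : Finset M → NNReal}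
    (hmono : ∀ A B : Finset M, A ⊆ B → v A ≤ v B)
    (hsub : ∀ A B : Finset M, v (A ∪ B) + v (A ∩ B) ≤ v A + v B)
    {y : M → ℝ} (hy : ∀ m, 0 ≤ y m ∧ y m ≤ 1) {g l : M} (hgl : g ≠ l)
    {a s : ℝ} (ha : 0 ≤ a) (hs : 0 ≤ s) :
    mlExt v y + a * marg v g y - s * marg v l y
      ≤ mlExt v (Function.update (Function.update y g (y g + a)) l (y l - s)) := by
  set Y := Function.update y g (y g + a) with hY
  have hYl : Y l = y l := Function.update_of_ne (Ne.symm hgl) _ _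
  have e1 : mlExt v Y = mlExt v y + a * marg v g y := by
    rw [hY, mlExt_update]; ring_nf
  have e2 : mlExt v (Function.update Y l (y l - s))
      = mlExt v Y + (y l - s - Y l) * marg v l Y := mlExt_update v Y l _
  have e3 : marg v l Y = marg v l y + a * crossE v g l y := by
    rw [hY, marg_update hgl]; ring_nf
  have hcross : crossE v g l y ≤ 0 := crossE_nonpos hsub hgl hy
  have : mlExt v (Function.update Y l (y l - s))
      = mlExt v y + a * marg v g y - s * (marg v l y + a * crossE v g l y) := by
    rw [e2, e1, e3, hYl]; ring
  rw [this]
  nlinarith [mul_nonneg (mul_nonneg hs ha) (neg_nonneg.2 hcross)]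

end Cyc

namespace Cyc

variable {N M : Type*}

lemma adj_flip {x : N → M → ℝ} {a b : N ⊕ M} (h : (allocGraph x).Adj a b) :
    a.isLeft = !b.isLeft := by
  rcases h with ⟨i, j, rfl, rfl, -⟩ | ⟨i, j, rfl, rfl, -⟩ <;> rfl


lemma support_get_eq_getVert {V : Type*} {G : SimpleGraph V} :
    ∀ {u v : V} (c : G.Walk u v) (i : ℕ) (h : i < c.support.length),
      c.support.get ⟨i, h⟩ = c.getVert i := by
  intro u v c
  induction c with
  | nil =>
    intro i h
    simp only [SimpleGraph.Walk.support_nil, List.length_singleton] at h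
    have : i = 0 := by omega
    subst this; rfl
  | cons hadj c ih =>
    intro i h
    cases i with
    | zero => rfl
    | succ j =>
      have hlen : j < c.support.length := by
        simpa [SimpleGraph.Walk.support_cons] using h
      have hstep : (SimpleGraph.Walk.cons hadj c).support.get ⟨j+1, h⟩
          = c.support.get ⟨j, hlen⟩ := rfl
      rw [hstep, ih j hlen, SimpleGraph.Walk.getVert_cons_succ]

lemma exists_cycle_data {x : N → M → ℝ} (h : ¬ (allocGraph x).IsAcyclic) :
    ∃ (k : ℕ) (I : Fin (k + 2) → N) (J : Fin (k + 2) → M),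
      Function.Injective I ∧ Function.Injective J ∧
      (∀ t, 0 < x (I t) (J t)) ∧ (∀ t, 0 < x (I (t + 1)) (J t)) := by
  classical
  rw [SimpleGraph.IsAcyclic] at h
  push_neg at h
  obtain ⟨w, c₀, hc₀⟩ := h
  -- rotate so that the basepoint is an agent
  obtain ⟨i₀, c, hc⟩ : ∃ (i₀ : N) (c : (allocGraph x).Walk (Sum.inl i₀) (Sum.inl i₀)),
      c.IsCycle := by
    cases hw : w with
    | inl i₀ => exact ⟨i₀, hw ▸ c₀, by subst hw; exact hc₀⟩
    | inr j₀ =>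
      subst hw
      have hnil : ¬ c₀.Nil := hc₀.not_nil
      have hadj1 : (allocGraph x).Adj (Sum.inr j₀) (c₀.getVert 1) :=
        SimpleGraph.Walk.adj_snd hnil
      rcases hadj1 with ⟨i, j, habs, -, -⟩ | ⟨i, j, -, heq, -⟩
      · exact absurd habs (by simp)
      · have hmem : c₀.getVert 1 ∈ c₀.support :=
          SimpleGraph.Walk.mem_support_iff_exists_getVert.2
            ⟨1, rfl, by have := SimpleGraph.Walk.not_nil_iff_lt_length.1 hnil; omega⟩
        refine ⟨i, (c₀.rotate _ hmem).copy heq heq, ?_⟩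
        rw [SimpleGraph.Walk.isCycle_copy]
        exact hc₀.rotate hmem
  clear hc₀ c₀ w
  set n := c.length with hn
  set P : ℕ → N ⊕ M := fun p => c.getVert p with hPdef
  have hP0 : P 0 = Sum.inl i₀ := c.getVert_zero
  have hPn : P n = Sum.inl i₀ := c.getVert_length
  have hadj : ∀ p, p < n → (allocGraph x).Adj (P p) (P (p + 1)) :=
    fun p hp => c.adj_getVert_succ hp
  have hn3 : 3 ≤ n := hc.three_le_length
  -- distinctness of positions 0..n-1
  have hinj : ∀ p q, p < n → q < n → P p = P q → p = q := by
    have hLlen : c.support.length = n + 1 := c.length_support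
    have htail : c.support.tail.Nodup := hc.support_nodup
    have htget : ∀ p (hp : p < n), P (p + 1) = c.support.tail.get ⟨p, by
        rw [List.length_tail, hLlen]; omega⟩ := by
      intro p hp
      show c.getVert (p+1) = _
      rw [← support_get_eq_getVert c (p+1) (by omega), List.get_tail]
    have key : ∀ p q (hp : p < n) (hq : q < n), P (p+1) = P (q+1) → p = q := by
      intro p q hp hq he
      rw [htget p hp, htget q hq] at he
      have := (htail.get_inj_iff).mp he
      simpa using this
    intro p q hp hq he
    rcases Nat.eq_zero_or_pos p with rfl | hp0
    · rcases Nat.eq_zero_or_pos q with rfl | hq0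
      · rfl
      · exfalso
        have : q - 1 = n - 1 := key (q-1) (n-1) (by omega) (by omega) (by
          rw [show q - 1 + 1 = q by omega, show n - 1 + 1 = n by omega, ← he, hP0, hPn])
        omega
    · rcases Nat.eq_zero_or_pos q with rfl | hq0
      · exfalso
        have : p - 1 = n - 1 := key (p-1) (n-1) (by omega) (by omega) (by
          rw [show p - 1 + 1 = p by omega, show n - 1 + 1 = n by omega, he, hP0, hPn])
        omega
      · have : p - 1 = q - 1 := key (p-1) (q-1) (by omega) (by omega) (by
          rw [show p - 1 + 1 = p by omega, show q - 1 + 1 = q by omega, he])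
        omega
  -- alternation
  have hside : ∀ p, p ≤ n → ((P p).isLeft = true ↔ Even p) := by
    intro p
    induction p with
    | zero => intro _; simp [hP0]
    | succ q ih =>
      intro hq
      have h1 := adj_flip (hadj q (by omega))
      have h2 := ih (by omega)
      rw [Nat.even_add_one, ← h2]
      rw [h1]; cases (P (q+1)).isLeft <;> simp
  have hneven : Even n := by
    have := (hside n le_rfl).1 (by rw [hPn]; rfl)
    exact this
  obtain ⟨k, hk⟩ : ∃ k, n = 2 * k := by
    obtain ⟨k, hk⟩ := hneven; exact ⟨k, by omega⟩
  have hk2 : 2 ≤ k := by omega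
  -- extract the alternating agent/item sequences
  have hPleft : ∀ t, 2*t ≤ n → ∃ i, P (2*t) = Sum.inl i := by
    intro t ht
    have := (hside (2*t) ht).2 ⟨t, by omega⟩
    cases hPt : P (2*t) with
    | inl i => exact ⟨i, rfl⟩
    | inr j => rw [hPt] at this; simp at this
  have hPright : ∀ t, 2*t+1 ≤ n → ∃ j, P (2*t+1) = Sum.inr j := by
    intro t ht
    have hodd : ¬ Even (2*t+1) := by
      rw [Nat.even_add_one]; exact fun h => h ⟨t, by omega⟩
    cases hPt : P (2*t+1) with
    | inl i =>
      exfalso; exact hodd ((hside (2*t+1) ht).1 (by rw [hPt]; rfl))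
    | inr j => exact ⟨j, rfl⟩
  obtain ⟨j₀, hj₀⟩ := hPright 0 (by omega)
  set I' : ℕ → N := fun t => (P (2*t)).elim id (fun _ => i₀) with hI'def
  set J' : ℕ → M := fun t => (P (2*t+1)).elim (fun _ => j₀) id with hJ'def
  have hIeq : ∀ t, 2*t ≤ n → P (2*t) = Sum.inl (I' t) := by
    intro t ht
    obtain ⟨i, hi⟩ := hPleft t ht
    rw [hI'def]; simp only [hi]; rfl
  have hJeq : ∀ t, 2*t+1 ≤ n → P (2*t+1) = Sum.inr (J' t) := by
    intro t ht
    obtain ⟨j, hj⟩ := hPright t ht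
    rw [hJ'def]; simp only [hj]; rfl
  have h1' : ∀ t, t < k → 0 < x (I' t) (J' t) := by
    intro t ht
    have hadj' := hadj (2*t) (by omega)
    rw [hIeq t (by omega), hJeq t (by omega)] at hadj'
    rcases hadj' with ⟨i, j, hi, hj, hpos⟩ | ⟨i, j, hi, -, -⟩
    · rw [Sum.inl.inj hi, Sum.inr.inj hj]; exact hpos
    · exact absurd hi (by simp)
  have h2' : ∀ t, t < k → 0 < x (I' (t+1)) (J' t) := by
    intro t ht
    have hadj' := hadj (2*t+1) (by omega)
    have h22 : 2*t+1+1 = 2*(t+1) := by omega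
    rw [hJeq t (by omega), h22, hIeq (t+1) (by omega)] at hadj'
    rcases hadj' with ⟨i, j, hi, -, -⟩ | ⟨i, j, hj, hi, hpos⟩
    · exact absurd hi (by simp)
    · rw [Sum.inl.inj hi, Sum.inr.inj hj]; exact hpos
  have hI0k : I' k = I' 0 := by
    have e1 : P (2*k) = Sum.inl (I' k) := hIeq k (by omega)
    have e2 : P (2*0) = Sum.inl (I' 0) := hIeq 0 (by omega)
    have e3 : P (2*k) = P 0 := by rw [← hk, hPn, hP0]
    have := e1.symm.trans (e3.trans (by simpa using e2))
    exact Sum.inl.inj this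
  have hIinj : ∀ t s, t < k → s < k → I' t = I' s → t = s := by
    intro t s ht hs he
    have := hinj (2*t) (2*s) (by omega) (by omega) (by
      rw [hIeq t (by omega), hIeq s (by omega), he])
    omega
  have hJinj : ∀ t s, t < k → s < k → J' t = J' s → t = s := by
    intro t s ht hs he
    have := hinj (2*t+1) (2*s+1) (by omega) (by omega) (by
      rw [hJeq t (by omega), hJeq s (by omega), he])
    omega
  obtain ⟨k', rfl⟩ : ∃ k', k = k' + 2 := ⟨k - 2, by omega⟩
  refine ⟨k', fun t => I' t.val, fun t => J' t.val, ?_, ?_, ?_, ?_⟩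
  · intro t s he
    exact Fin.ext (hIinj t.val s.val t.isLt s.isLt he)
  · intro t s he
    exact Fin.ext (hJinj t.val s.val t.isLt s.isLt he)
  · intro t
    exact h1' t.val t.isLt
  · intro t
    have hval : ((t + 1 : Fin (k' + 2)).val) = (t.val + 1) % (k' + 2) := by
      rw [Fin.add_def]; rfl
    show 0 < x (I' ((t + 1 : Fin (k' + 2)).val)) (J' t.val)
    rcases Nat.lt_or_ge (t.val + 1) (k' + 2) with hlt | hge
    · rw [show ((t + 1 : Fin (k' + 2)).val) = t.val + 1 by
        rw [hval, Nat.mod_eq_of_lt hlt]]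
      exact h2' t.val t.isLt
    · have hteq : t.val = k' + 1 := by have := t.isLt; omega
      rw [show ((t + 1 : Fin (k' + 2)).val) = 0 by
        rw [hval, hteq]; simp [Nat.mod_self], hteq]
      have := h2' (k' + 1) (by omega)
      rwa [show k' + 1 + 1 = k' + 2 from rfl, hI0k] at this

end Cyc

namespace Cyc
variable {N M : Type*} [Fintype N] [Fintype M]
set_option linter.unusedSectionVars false

noncomputable def suppCard (x : N → M → ℝ) : ℕ :=
  (Finset.univ.filter fun p : N × M => x p.1 p.2 ≠ 0).card

lemma suppCard_lt {x z : N → M → ℝ} (hsub : ∀ a b, x a b = 0 → z a b = 0)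
    {i : N} {j : M} (hne : x i j ≠ 0) (hz : z i j = 0) : suppCard z < suppCard x := by
  apply Finset.card_lt_card
  constructor
  · intro p hp
    rw [Finset.mem_filter] at hp ⊢
    refine ⟨Finset.mem_univ _, fun h0 => hp.2 (hsub p.1 p.2 h0)⟩
  · intro hcon
    have := hcon (Finset.mem_filter.2 ⟨Finset.mem_univ (i, j), hne⟩)
    rw [Finset.mem_filter] at this
    exact this.2 hz

lemma le_one_of_col {z : N → M → ℝ} (h0 : ∀ i j, 0 ≤ z i j)
    (h1 : ∀ j, ∑ i, z i j = 1) (i : N) (j : M) : z i j ≤ 1 := by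
  calc z i j ≤ ∑ i', z i' j :=
        Finset.single_le_sum (fun a _ => h0 a j) (Finset.mem_univ i)
    _ = 1 := h1 j


section Construction
variable [DecidableEq M]

lemma rows_mem {x : N → M → ℝ} (hx : IsFracAlloc x) (i : N) :
    ∀ m, 0 ≤ x i m ∧ x i m ≤ 1 := fun m => hx.1 i m

/-- Case A: a freely shed edge. -/
lemma caseA {v : N → Finset M → NNReal}
    (hmono : ∀ i, ∀ A B : Finset M, A ⊆ B → v i A ≤ v i B)
    {x : N → M → ℝ} (hx : IsFracAlloc x) {i i' : N} {j : M} (hii' : i ≠ i')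
    (hxij : 0 < x i j) (hxi'j : 0 < x i' j)
    (hmarg : marg (v i) j (x i) = 0) :
    ∃ z : N → M → ℝ, IsFracAlloc z ∧ suppCard z < suppCard x ∧
      ∀ a, mlExt (v a) (x a) ≤ mlExt (v a) (z a) := by
  classical
  set z : N → M → ℝ := fun a =>
    if a = i then Function.update (x i) j 0
    else if a = i' then Function.update (x i') j (x i' j + x i j)
    else x a with hzdef
  have hz_i : z i = Function.update (x i) j 0 := by simp [hzdef]
  have hz_i' : z i' = Function.update (x i') j (x i' j + x i j) := by
    simp [hzdef, Ne.symm hii']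
  have hz_other : ∀ a, a ≠ i → a ≠ i' → z a = x a := by
    intro a h1 h2; simp [hzdef, h1, h2]
  have hz_offcol : ∀ a b, b ≠ j → z a b = x a b := by
    intro a b hb
    rcases eq_or_ne a i with rfl | h1
    · rw [hz_i, Function.update_of_ne hb]
    rcases eq_or_ne a i' with rfl | h2
    · rw [hz_i', Function.update_of_ne hb]
    · rw [hz_other a h1 h2]
  have h0 : ∀ a b, 0 ≤ z a b := by
    intro a b
    rcases eq_or_ne b j with rfl | hb
    · rcases eq_or_ne a i with rfl | h1
      · rw [hz_i, Function.update_self]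
      rcases eq_or_ne a i' with rfl | h2
      · rw [hz_i', Function.update_self]; positivity
      · rw [hz_other a h1 h2]; exact (hx.1 a b).1
    · rw [hz_offcol a b hb]; exact (hx.1 a b).1
  have hcol : ∀ b, ∑ a, z a b = 1 := by
    intro b
    rcases eq_or_ne b j with rfl | hb
    · have key : ∀ a, z a b = x a b + ((if a = i then -(x i b) else 0)
          + (if a = i' then x i b else 0)) := by
        intro a
        rcases eq_or_ne a i with rfl | h1
        · rw [hz_i, Function.update_self, if_pos rfl, if_neg hii']; ring
        rcases eq_or_ne a i' with rfl | h2
        · rw [hz_i', Function.update_self, if_neg h1, if_pos rfl]; ring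
        · rw [hz_other a h1 h2, if_neg h1, if_neg h2]; ring
      rw [Finset.sum_congr rfl (fun a _ => key a)]
      rw [Finset.sum_add_distrib, Finset.sum_add_distrib, hx.2 b]
      rw [Finset.sum_ite_eq' Finset.univ i (fun _ => -(x i b)),
        Finset.sum_ite_eq' Finset.univ i' (fun _ => x i b)]
      simp
    · rw [Finset.sum_congr rfl (fun a _ => hz_offcol a b hb), hx.2 b]
  refine ⟨z, ⟨fun a b => ⟨h0 a b, le_one_of_col h0 hcol a b⟩, hcol⟩, ?_, ?_⟩
  · refine suppCard_lt (x := x) (z := z) ?_ (i := i) (j := j) (by positivity) ?_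
    · intro a b hab
      rcases eq_or_ne b j with rfl | hb
      · rcases eq_or_ne a i with rfl | h1
        · rw [hz_i, Function.update_self]
        rcases eq_or_ne a i' with rfl | h2
        · exact absurd hab (by positivity)
        · rw [hz_other a h1 h2]; exact hab
      · rw [hz_offcol a b hb]; exact hab
    · rw [hz_i, Function.update_self]
  · intro a
    rcases eq_or_ne a i with rfl | h1
    · rw [hz_i, mlExt_update, hmarg]; simp
    rcases eq_or_ne a i' with rfl | h2
    · rw [hz_i', mlExt_update]
      have h1' : 0 ≤ marg (v a) j (x a) := marg_nonneg (hmono a) (rows_mem hx a) j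
      nlinarith [hxij]
    · rw [hz_other a h1 h2]

end Construction


section CaseB
variable [DecidableEq M]

lemma fin_succ_ne (k : ℕ) (u : Fin (k+2)) : u + 1 ≠ u := by
  intro h
  have hval := congrArg Fin.val h
  rw [Fin.val_add_one] at hval
  by_cases hl : u = Fin.last (k+1)
  · rw [if_pos hl] at hval
    rw [hl] at hval
    simp [Fin.val_last] at hval
  · rw [if_neg hl] at hval
    omega

lemma fin_pred_add (k : ℕ) (u : Fin (k+2)) : u - 1 + 1 = u := by
  rw [sub_add_cancel]

lemma fin_pred_ne (k : ℕ) (u : Fin (k+2)) : u - 1 ≠ u := by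
  intro h
  have h2 := congrArg (fun w => w + 1) h
  simp only [fin_pred_add] at h2
  exact fin_succ_ne k u h2.symm

/-- the cyclic recurrence for the geometric weights. -/
lemma weights_exist (k : ℕ) (G L : Fin (k+2) → ℝ)
    (hG : ∀ t, 0 < G t) (hL : ∀ t, 0 < L t)
    (hprod : ∏ t, L t ≤ ∏ t, G t) :
    ∃ s : Fin (k+2) → ℝ, (∀ t, 0 < s t) ∧
      (∀ t, s (t+1) * L (t+1) ≤ s t * G t) := by
  classical
  refine ⟨fun t => (∏ r ∈ Finset.Iio t, G r) * (∏ r ∈ Finset.Ioi t, L r), ?_, ?_⟩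
  · intro t
    exact mul_pos (Finset.prod_pos fun r _ => hG r) (Finset.prod_pos fun r _ => hL r)
  · intro t
    rcases eq_or_ne t (Fin.last (k+1)) with rfl | hlast
    · -- wrap-around case
      simp only []
      rw [Fin.last_add_one]
      have e1 : (Finset.Iio (0 : Fin (k+2))) = ∅ := by
        ext r
        simp only [Finset.mem_Iio, Finset.notMem_empty, iff_false]
        exact fun hcon => absurd hcon (by simp [Fin.lt_def])
      have e2 : (Finset.Ioi (Fin.last (k+1))) = ∅ := by
        ext r
        simp only [Finset.mem_Ioi, Finset.notMem_empty, iff_false]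
        exact not_lt.mpr (Fin.le_last r)
      have e3 : insert (0 : Fin (k+2)) (Finset.Ioi (0 : Fin (k+2))) = Finset.univ := by
        ext r
        simp only [Finset.mem_insert, Finset.mem_Ioi, Finset.mem_univ, iff_true]
        rcases eq_or_ne r 0 with rfl | hr
        · exact Or.inl rfl
        · exact Or.inr (Fin.pos_of_ne_zero hr)
      have e4 : insert (Fin.last (k+1)) (Finset.Iio (Fin.last (k+1))) = Finset.univ := by
        ext r
        simp only [Finset.mem_insert, Finset.mem_Iio, Finset.mem_univ, iff_true]
        rcases eq_or_ne r (Fin.last (k+1)) with rfl | hr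
        · exact Or.inl rfl
        · exact Or.inr (lt_of_le_of_ne (Fin.le_last r) hr)
      have h0notmem : (0 : Fin (k+2)) ∉ Finset.Ioi (0 : Fin (k+2)) := by
        simp only [Finset.mem_Ioi]
        exact lt_irrefl 0
      have hlnotmem : (Fin.last (k+1)) ∉ Finset.Iio (Fin.last (k+1)) := by
        simp only [Finset.mem_Iio]
        exact lt_irrefl _
      have lhs_eq : ((∏ r ∈ Finset.Iio (0:Fin (k+2)), G r) * (∏ r ∈ Finset.Ioi (0:Fin (k+2)), L r)) * L 0
          = ∏ t, L t := by
        conv_rhs => rw [← e3]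
        rw [e1, Finset.prod_empty, Finset.prod_insert h0notmem]
        ring
      have rhs_eq : ((∏ r ∈ Finset.Iio (Fin.last (k+1)), G r) * (∏ r ∈ Finset.Ioi (Fin.last (k+1)), L r)) * G (Fin.last (k+1))
          = ∏ t, G t := by
        conv_rhs => rw [← e4]
        rw [e2, Finset.prod_empty, Finset.prod_insert hlnotmem]
        ring
      calc ((∏ r ∈ Finset.Iio (0:Fin (k+2)), G r) * (∏ r ∈ Finset.Ioi (0:Fin (k+2)), L r)) * L 0
          = ∏ t, L t := lhs_eq
        _ ≤ ∏ t, G t := hprod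
        _ = _ := rhs_eq.symm
    · -- interior case: equality
      have hvne : t.val ≠ k+1 := fun hv => hlast (Fin.ext (by simp [Fin.val_last, hv]))
      have hval : t.val < k + 1 := by have := t.isLt; omega
      have hsucc : (t + 1 : Fin (k+2)).val = t.val + 1 := by
        rw [Fin.val_add_one, if_neg hlast]
      have A1 : Finset.Iio (t+1) = insert t (Finset.Iio t) := by
        ext r
        simp only [Finset.mem_insert, Finset.mem_Iio]
        constructor
        · intro h
          have hv : r.val < t.val + 1 := by
            have := Fin.lt_def.mp h; rwa [hsucc] at this
          rcases Nat.lt_or_ge r.val t.val with h' | h'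
          · exact Or.inr (Fin.lt_def.mpr h')
          · exact Or.inl (Fin.ext (by omega))
        · rintro (rfl | h)
          · exact Fin.lt_def.mpr (by rw [hsucc]; omega)
          · exact Fin.lt_def.mpr (by rw [hsucc]; have := Fin.lt_def.mp h; omega)
      have A2 : Finset.Ioi t = insert (t+1) (Finset.Ioi (t+1)) := by
        ext r
        simp only [Finset.mem_insert, Finset.mem_Ioi]
        constructor
        · intro h
          have hv : t.val < r.val := Fin.lt_def.mp h
          rcases Nat.lt_or_ge (t.val+1) r.val with h' | h'
          · exact Or.inr (Fin.lt_def.mpr (by rw [hsucc]; exact h'))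
          · exact Or.inl (Fin.ext (by rw [hsucc]; omega))
        · rintro (rfl | h)
          · exact Fin.lt_def.mpr (by rw [hsucc]; omega)
          · have := Fin.lt_def.mp h
            rw [hsucc] at this
            exact Fin.lt_def.mpr (by omega)
      have ht_notmem : t ∉ Finset.Iio t := by
        simp only [Finset.mem_Iio]; exact lt_irrefl t
      have ht1_notmem : (t+1) ∉ Finset.Ioi (t+1) := by
        simp only [Finset.mem_Ioi]; exact lt_irrefl _
      simp only []
      rw [A1, A2, Finset.prod_insert ht_notmem, Finset.prod_insert ht1_notmem]
      apply le_of_eq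
      ring

end CaseB


section CaseBMain
variable [DecidableEq M]

lemma caseB {v : N → Finset M → NNReal}
    (hmono : ∀ i, ∀ A B : Finset M, A ⊆ B → v i A ≤ v i B)
    (hsub : ∀ i, ∀ A B : Finset M, v i (A ∪ B) + v i (A ∩ B) ≤ v i A + v i B)
    {x : N → M → ℝ} (hx : IsFracAlloc x) {k : ℕ}
    (I : Fin (k+2) → N) (J : Fin (k+2) → M)
    (hI : Function.Injective I) (hJ : Function.Injective J)
    (h1 : ∀ t, 0 < x (I t) (J t)) (h2 : ∀ t, 0 < x (I (t+1)) (J t))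
    (hGpos : ∀ t, 0 < marg (v (I (t+1))) (J t) (x (I (t+1))))
    (hLpos : ∀ t, 0 < marg (v (I t)) (J t) (x (I t)))
    (hprod : ∏ t, marg (v (I t)) (J t) (x (I t))
        ≤ ∏ t, marg (v (I (t+1))) (J t) (x (I (t+1)))) :
    ∃ z : N → M → ℝ, IsFracAlloc z ∧ suppCard z < suppCard x ∧
      ∀ a, mlExt (v a) (x a) ≤ mlExt (v a) (z a) := by
  classical
  set G : Fin (k+2) → ℝ := fun t => marg (v (I (t+1))) (J t) (x (I (t+1))) with hGdef
  set L : Fin (k+2) → ℝ := fun t => marg (v (I t)) (J t) (x (I t)) with hLdef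
  obtain ⟨s, hspos, hsrec⟩ := weights_exist k G L hGpos hLpos hprod
  set cap : Fin (k+2) → ℝ := fun t => x (I t) (J t) with hcapdef
  have hcappos : ∀ t, 0 < cap t := h1
  have huniv : (Finset.univ : Finset (Fin (k+2))).Nonempty := ⟨0, Finset.mem_univ 0⟩
  obtain ⟨tstar, -, htstar⟩ := Finset.exists_mem_eq_inf' huniv (fun t => cap t / s t)
  set lam : ℝ := cap tstar / s tstar with hlamdef
  have hlampos : 0 < lam := div_pos (hcappos tstar) (hspos tstar)
  have hlam_le : ∀ t, lam ≤ cap t / s t := by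
    intro t
    rw [← htstar]
    exact Finset.inf'_le _ (Finset.mem_univ t)
  set σ : Fin (k+2) → ℝ := fun t => lam * s t with hσdef
  have hσpos : ∀ t, 0 < σ t := fun t => mul_pos hlampos (hspos t)
  have hσle : ∀ t, σ t ≤ cap t := by
    intro t
    have := hlam_le t
    rw [hσdef]
    calc lam * s t ≤ (cap t / s t) * s t := by
          exact mul_le_mul_of_nonneg_right this (le_of_lt (hspos t))
      _ = cap t := div_mul_cancel₀ _ (ne_of_gt (hspos t))
  have hσstar : σ tstar = cap tstar := by
    rw [hσdef]
    simp only []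
    rw [hlamdef, div_mul_cancel₀ _ (ne_of_gt (hspos tstar))]
  have hσrec : ∀ t, σ (t+1) * L (t+1) ≤ σ t * G t := by
    intro t
    have := hsrec t
    rw [hσdef]
    simp only []
    calc lam * s (t+1) * L (t+1) = lam * (s (t+1) * L (t+1)) := by ring
      _ ≤ lam * (s t * G t) :=
          mul_le_mul_of_nonneg_left this (le_of_lt hlampos)
      _ = lam * s t * G t := by ring
  -- the new allocation
  set R : N → M → ℝ := fun a b => ∑ t, if a = I (t+1) ∧ b = J t then σ t else 0 with hRdef
  set S : N → M → ℝ := fun a b => ∑ t, if a = I t ∧ b = J t then σ t else 0 with hSdef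
  set z : N → M → ℝ := fun a b => x a b + R a b - S a b with hzdef
  have hJne : ∀ u : Fin (k+2), J (u - 1) ≠ J u :=
    fun u h => fin_pred_ne k u (hJ h)
  have hS_row : ∀ (u : Fin (k+2)) b, S (I u) b = if b = J u then σ u else 0 := by
    intro u b
    rw [hSdef]
    simp only []
    rw [Finset.sum_eq_single u]
    · simp
    · intro r _ hru
      rw [if_neg]
      rintro ⟨hIr, -⟩
      exact hru (hI hIr.symm)
    · intro hcon; exact absurd (Finset.mem_univ u) hcon
  have hR_row : ∀ (u : Fin (k+2)) b, R (I u) b = if b = J (u-1) then σ (u-1) else 0 := by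
    intro u b
    rw [hRdef]
    simp only []
    rw [Finset.sum_eq_single (u-1)]
    · rw [fin_pred_add]
      simp
    · intro r _ hru
      rw [if_neg]
      rintro ⟨hIr, -⟩
      apply hru
      have : u = r + 1 := hI hIr
      rw [this]
      simp
    · intro hcon; exact absurd (Finset.mem_univ (u-1)) hcon
  have hz_other : ∀ a, (∀ u, a ≠ I u) → z a = x a := by
    intro a ha
    funext b
    rw [hzdef]
    simp only []
    have hR0 : R a b = 0 := by
      rw [hRdef]
      simp only []
      apply Finset.sum_eq_zero
      intro t _
      rw [if_neg]
      rintro ⟨hIa, -⟩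
      exact ha (t+1) hIa
    have hS0 : S a b = 0 := by
      rw [hSdef]
      simp only []
      apply Finset.sum_eq_zero
      intro t _
      rw [if_neg]
      rintro ⟨hIa, -⟩
      exact ha t hIa
    rw [hR0, hS0]
    ring
  have hrow : ∀ u : Fin (k+2), z (I u) = Function.update
      (Function.update (x (I u)) (J (u-1)) (x (I u) (J (u-1)) + σ (u-1)))
      (J u) (x (I u) (J u) - σ u) := by
    intro u
    funext b
    rw [hzdef]
    simp only []
    rw [hR_row u b, hS_row u b]
    rcases eq_or_ne b (J u) with rfl | hbu
    · rw [if_neg (by exact fun h => hJne u h.symm), if_pos rfl,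
        Function.update_self]
      ring
    · rw [Function.update_of_ne hbu, if_neg hbu]
      rcases eq_or_ne b (J (u-1)) with rfl | hbu1
      · rw [if_pos rfl, Function.update_self]
        ring
      · rw [if_neg hbu1, Function.update_of_ne hbu1]
        ring
  -- column sums
  have hcol : ∀ b, ∑ a, z a b = 1 := by
    intro b
    have hsplit : ∑ a, z a b = (∑ a, x a b) + (∑ a, R a b) - (∑ a, S a b) := by
      rw [hzdef]
      simp only []
      rw [← Finset.sum_add_distrib, ← Finset.sum_sub_distrib]
    have hRsum : ∑ a, R a b = ∑ t, (if b = J t then σ t else 0) := by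
      rw [hRdef]
      simp only []
      rw [Finset.sum_comm]
      refine Finset.sum_congr rfl fun t _ => ?_
      simp only [ite_and]
      rw [Finset.sum_ite_eq' Finset.univ (I (t+1)) (fun _ => if b = J t then σ t else 0)]
      simp
    have hSsum : ∑ a, S a b = ∑ t, (if b = J t then σ t else 0) := by
      rw [hSdef]
      simp only []
      rw [Finset.sum_comm]
      refine Finset.sum_congr rfl fun t _ => ?_
      simp only [ite_and]
      rw [Finset.sum_ite_eq' Finset.univ (I t) (fun _ => if b = J t then σ t else 0)]
      simp
    rw [hsplit, hRsum, hSsum, hx.2 b]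
    ring
  -- nonnegativity
  have h0 : ∀ a b, 0 ≤ z a b := by
    intro a b
    by_cases ha : ∃ u, a = I u
    · obtain ⟨u, rfl⟩ := ha
      rw [hrow u]
      rcases eq_or_ne b (J u) with rfl | hbu
      · rw [Function.update_self]
        have := hσle u
        rw [hcapdef] at this
        linarith
      · rw [Function.update_of_ne hbu]
        rcases eq_or_ne b (J (u-1)) with rfl | hbu1
        · rw [Function.update_self]
          have := (hx.1 (I u) (J (u-1))).1
          have := le_of_lt (hσpos (u-1))
          linarith
        · rw [Function.update_of_ne hbu1]
          exact (hx.1 (I u) b).1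
    · push_neg at ha
      rw [hz_other a ha]
      exact (hx.1 a b).1
  refine ⟨z, ⟨fun a b => ⟨h0 a b, le_one_of_col h0 hcol a b⟩, hcol⟩, ?_, ?_⟩
  · -- support decreases
    refine suppCard_lt (x := x) (z := z) ?_
      (i := I tstar) (j := J tstar) (ne_of_gt (h1 tstar)) ?_
    · intro a b hab
      by_cases ha : ∃ u, a = I u
      · obtain ⟨u, rfl⟩ := ha
        rw [hrow u]
        rcases eq_or_ne b (J u) with rfl | hbu
        · exact absurd hab (ne_of_gt (h1 u))
        · rw [Function.update_of_ne hbu]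
          rcases eq_or_ne b (J (u-1)) with rfl | hbu1
          · exfalso
            have := h2 (u-1)
            rw [fin_pred_add] at this
            exact (ne_of_gt this) hab
          · rw [Function.update_of_ne hbu1]
            exact hab
      · push_neg at ha
        rw [hz_other a ha]
        exact hab
    · rw [hrow tstar, Function.update_self, hσstar, hcapdef]
      ring
  · -- values do not decrease
    intro a
    by_cases ha : ∃ u, a = I u
    · obtain ⟨u, rfl⟩ := ha
      rw [hrow u]
      have hgl : J (u-1) ≠ J u := hJne u
      have key := main_delta (v := v (I u)) (hmono (I u)) (hsub (I u))
        (rows_mem hx (I u)) hgl (le_of_lt (hσpos (u-1))) (le_of_lt (hσpos u))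
      refine le_trans ?_ key
      have hrec' := hσrec (u-1)
      rw [fin_pred_add] at hrec'
      have hGL : marg (v (I u)) (J (u-1)) (x (I u)) = G (u-1) := by
        rw [hGdef]
        simp only []
        rw [fin_pred_add]
      have hLL : marg (v (I u)) (J u) (x (I u)) = L u := by
        rw [hLdef]
      rw [hGL, hLL]
      nlinarith [hrec']
    · push_neg at ha
      rw [hz_other a ha]

end CaseBMain


section Step
variable [DecidableEq M]

lemma step {v : N → Finset M → NNReal}
    (hmono : ∀ i, ∀ A B : Finset M, A ⊆ B → v i A ≤ v i B)
    (hsub : ∀ i, ∀ A B : Finset M, v i (A ∪ B) + v i (A ∩ B) ≤ v i A + v i B)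
    {x : N → M → ℝ} (hx : IsFracAlloc x)
    (hcyc : ¬ (allocGraph x).IsAcyclic) :
    ∃ z : N → M → ℝ, IsFracAlloc z ∧ suppCard z < suppCard x ∧
      ∀ a, mlExt (v a) (x a) ≤ mlExt (v a) (z a) := by
  classical
  obtain ⟨k, I, J, hI, hJ, h1, h2⟩ := exists_cycle_data hcyc
  have hIne : ∀ t : Fin (k+2), I t ≠ I (t+1) := by
    intro t h
    exact fin_succ_ne k t (hI h.symm)
  by_cases hL0 : ∃ t : Fin (k+2), marg (v (I t)) (J t) (x (I t)) = 0
  · obtain ⟨t, ht⟩ := hL0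
    exact caseA hmono hx (hIne t) (h1 t) (h2 t) ht
  by_cases hG0 : ∃ t : Fin (k+2), marg (v (I (t+1))) (J t) (x (I (t+1))) = 0
  · obtain ⟨t, ht⟩ := hG0
    exact caseA hmono hx (Ne.symm (hIne t)) (h2 t) (h1 t) ht
  push_neg at hL0 hG0
  have hLpos : ∀ t : Fin (k+2), 0 < marg (v (I t)) (J t) (x (I t)) := by
    intro t
    exact lt_of_le_of_ne (marg_nonneg (hmono (I t)) (rows_mem hx (I t)) (J t))
      (Ne.symm (hL0 t))
  have hGpos : ∀ t : Fin (k+2), 0 < marg (v (I (t+1))) (J t) (x (I (t+1))) := by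
    intro t
    exact lt_of_le_of_ne
      (marg_nonneg (hmono (I (t+1))) (rows_mem hx (I (t+1))) (J t)) (Ne.symm (hG0 t))
  rcases le_total (∏ t, marg (v (I t)) (J t) (x (I t)))
      (∏ t, marg (v (I (t+1))) (J t) (x (I (t+1)))) with hord | hord
  · exact caseB hmono hsub hx I J hI hJ h1 h2 hGpos hLpos hord
  · -- reverse the cycle
    set I' : Fin (k+2) → N := fun r => I (-r) with hI'def
    set J' : Fin (k+2) → M := fun r => J (-r-1) with hJ'def
    have hnegadd : ∀ t : Fin (k+2), -(t+1) = -t-1 := by intro t; abel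
    have hI'inj : Function.Injective I' := by
      intro a b h
      have := hI h
      exact neg_injective this
    have hJ'inj : Function.Injective J' := by
      intro a b h
      have h2' := hJ h
      have : (-a : Fin (k+2)) = -b := by
        have := congrArg (fun w => w + 1) h2'
        simpa [sub_add_cancel] using this
      exact neg_injective this
    have h1' : ∀ t, 0 < x (I' t) (J' t) := by
      intro t
      rw [hI'def, hJ'def]
      simp only []
      have := h2 (-t-1)
      rwa [show (-t-1 : Fin (k+2)) + 1 = -t by abel] at this
    have h2' : ∀ t, 0 < x (I' (t+1)) (J' t) := by
      intro t
      rw [hI'def, hJ'def]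
      simp only []
      rw [hnegadd t]
      exact h1 (-t-1)
    have hG' : ∀ t, marg (v (I' (t+1))) (J' t) (x (I' (t+1)))
        = marg (v (I (-t-1))) (J (-t-1)) (x (I (-t-1))) := by
      intro t
      rw [hI'def, hJ'def]
      simp only []
      rw [hnegadd t]
    have hL' : ∀ t, marg (v (I' t)) (J' t) (x (I' t))
        = marg (v (I ((-t-1)+1))) (J (-t-1)) (x (I ((-t-1)+1))) := by
      intro t
      rw [hI'def, hJ'def]
      simp only []
      rw [show (-t-1 : Fin (k+2)) + 1 = -t by abel]
    have hG'pos : ∀ t, 0 < marg (v (I' (t+1))) (J' t) (x (I' (t+1))) := by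
      intro t
      rw [hG' t]
      exact hLpos (-t-1)
    have hL'pos : ∀ t, 0 < marg (v (I' t)) (J' t) (x (I' t)) := by
      intro t
      rw [hL' t]
      exact hGpos (-t-1)
    have hperm : Function.Involutive (fun t : Fin (k+2) => -t-1) := by
      intro t; show -(-t-1)-1 = t; abel
    have hord' : ∏ t, marg (v (I' t)) (J' t) (x (I' t))
        ≤ ∏ t, marg (v (I' (t+1))) (J' t) (x (I' (t+1))) := by
      rw [Finset.prod_congr rfl (fun t _ => hL' t),
        Finset.prod_congr rfl (fun t _ => hG' t)]
      rw [← Equiv.prod_comp hperm.toPerm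
        (fun r => marg (v (I (r+1))) (J r) (x (I (r+1)))),
        ← Equiv.prod_comp hperm.toPerm
        (fun r => marg (v (I r)) (J r) (x (I r)))] at hord
      exact hord
    exact caseB hmono hsub hx I' J' hI'inj hJ'inj h1' h2' hG'pos hL'pos hord'

end Step


section Main
variable [DecidableEq M]

lemma main_aux {v : N → Finset M → NNReal}
    (hmono : ∀ i, ∀ A B : Finset M, A ⊆ B → v i A ≤ v i B)
    (hsub : ∀ i, ∀ A B : Finset M, v i (A ∪ B) + v i (A ∩ B) ≤ v i A + v i B) :
    ∀ (n : ℕ) (x : N → M → ℝ), suppCard x ≤ n → IsFracAlloc x →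
      ∃ x' : N → M → ℝ, IsFracAlloc x' ∧ (allocGraph x').IsAcyclic ∧
        ∀ i, mlExt (v i) (x i) ≤ mlExt (v i) (x' i) := by
  intro n
  induction n with
  | zero =>
    intro x hn hx
    by_cases hcyc : (allocGraph x).IsAcyclic
    · exact ⟨x, hx, hcyc, fun i => le_refl _⟩
    · obtain ⟨z, -, hlt, -⟩ := step hmono hsub hx hcyc
      omega
  | succ n ih =>
    intro x hn hx
    by_cases hcyc : (allocGraph x).IsAcyclic
    · exact ⟨x, hx, hcyc, fun i => le_refl _⟩
    · obtain ⟨z, hz, hlt, hdom⟩ := step hmono hsub hx hcyc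
      obtain ⟨x', hx', hacyc, hdom'⟩ := ih z (by omega) hz
      exact ⟨x', hx', hacyc, fun i => le_trans (hdom i) (hdom' i)⟩

end Main

end Cyc

/-- cycle canceling for submodular valuations (main theorem). -/
theorem stmt3 {N M : Type*} [Fintype N] [Fintype M] [DecidableEq M]
    (v : N → Finset M → NNReal)
    (hmono : ∀ i, IsMonotoneVal (v i)) (hsub : ∀ i, IsSubmodular (v i))
    (hnorm : ∀ i, IsNormalized (v i))
    (x : N → M → ℝ) (hx : IsFracAlloc x) :
    ∃ x' : N → M → ℝ, IsFracAlloc x' ∧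
      (allocGraph x').IsAcyclic ∧
      ∀ i, mlExt (v i) (x i) ≤ mlExt (v i) (x' i) := by
  exact Cyc.main_aux (fun i A B h => hmono i A B h) (fun i A B => hsub i A B)
    (Cyc.suppCard x) x le_rfl hx
end

section
/- Let f : 2^M → ℝ≥0 be a monotone, submodular, normalized set function with multilinear extension F and concave closure f^+. Then for every y ∈ [0,1]^M, F(y) ≥ (1 − 1/e) · f^+(y). -/
open Finset

set_option linter.unusedSectionVars false
set_option maxHeartbeats 1000000

section stmt9aux
variable {M : Type*} [Fintype M] [DecidableEq M]


noncomputable def gext (A : Finset M) (g : Finset M → ℝ) (x : M → ℝ) : ℝ :=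
  ∑ S ∈ A.powerset, g S * ((∏ k ∈ S, x k) * ∏ k ∈ A \ S, (1 - x k))

lemma gext_split {A : Finset M} {j : M} (hj : j ∈ A) (g : Finset M → ℝ) (x : M → ℝ) :
    gext A g x = x j * gext (A.erase j) (fun S => g (insert j S)) x
      + (1 - x j) * gext (A.erase j) g x := by
  have hA : A = insert j (A.erase j) := (Finset.insert_erase hj).symm
  have hje : j ∉ A.erase j := Finset.notMem_erase _ _
  rw [gext]
  rw [show (∑ S ∈ A.powerset, g S * ((∏ k ∈ S, x k) * ∏ k ∈ A \ S, (1 - x k)))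
      = ∑ S ∈ (insert j (A.erase j)).powerset, g S * ((∏ k ∈ S, x k) * ∏ k ∈ A \ S, (1 - x k))
    from by rw [← hA]]
  rw [Finset.sum_powerset_insert hje]
  have h1 : ∀ S ∈ (A.erase j).powerset,
      g S * ((∏ k ∈ S, x k) * ∏ k ∈ A \ S, (1 - x k))
      = (1 - x j) * (g S * ((∏ k ∈ S, x k) * ∏ k ∈ (A.erase j) \ S, (1 - x k))) := by
    intro S hS
    rw [Finset.mem_powerset] at hS
    have hjS : j ∉ S := fun h => hje (hS h)
    have : A \ S = insert j ((A.erase j) \ S) := by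
      ext k
      simp only [Finset.mem_sdiff, Finset.mem_insert, Finset.mem_erase]
      constructor
      · rintro ⟨hk, hk2⟩
        by_cases hkj : k = j
        · exact Or.inl hkj
        · exact Or.inr ⟨⟨hkj, hk⟩, hk2⟩
      · rintro (rfl | ⟨⟨_, hk⟩, hk2⟩)
        · exact ⟨hj, hjS⟩
        · exact ⟨hk, hk2⟩
    rw [this, Finset.prod_insert (by simp)]
    ring
  have h2 : ∀ S ∈ (A.erase j).powerset,
      g (insert j S) * ((∏ k ∈ insert j S, x k) * ∏ k ∈ A \ insert j S, (1 - x k))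
      = x j * (g (insert j S) * ((∏ k ∈ S, x k) * ∏ k ∈ (A.erase j) \ S, (1 - x k))) := by
    intro S hS
    rw [Finset.mem_powerset] at hS
    have hjS : j ∉ S := fun h => hje (hS h)
    have : A \ insert j S = (A.erase j) \ S := by
      ext k
      simp only [Finset.mem_sdiff, Finset.mem_insert, Finset.mem_erase]
      tauto
    rw [this, Finset.prod_insert hjS]
    ring
  rw [Finset.sum_congr rfl h1, Finset.sum_congr rfl h2, ← Finset.mul_sum, ← Finset.mul_sum]
  rw [gext, gext]
  ring

lemma gext_sub (A : Finset M) (g1 g2 : Finset M → ℝ) (x : M → ℝ) :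
    gext A (fun S => g1 S - g2 S) x = gext A g1 x - gext A g2 x := by
  simp [gext, sub_mul, Finset.sum_sub_distrib]

lemma gext_nonneg {A : Finset M} {g : Finset M → ℝ} {x : M → ℝ}
    (hx : ∀ k, 0 ≤ x k ∧ x k ≤ 1) (hg : ∀ S ∈ A.powerset, 0 ≤ g S) :
    0 ≤ gext A g x := by
  apply Finset.sum_nonneg
  intro S hS
  apply mul_nonneg (hg S hS)
  exact mul_nonneg (Finset.prod_nonneg fun k _ => (hx k).1)
    (Finset.prod_nonneg fun k _ => by linarith [(hx k).2])

lemma gext_mono_g {A : Finset M} {g g' : Finset M → ℝ} {x : M → ℝ}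
    (hx : ∀ k, 0 ≤ x k ∧ x k ≤ 1) (hg : ∀ S ∈ A.powerset, g S ≤ g' S) :
    gext A g x ≤ gext A g' x := by
  apply Finset.sum_le_sum
  intro S hS
  apply mul_le_mul_of_nonneg_right (hg S hS)
  exact mul_nonneg (Finset.prod_nonneg fun k _ => (hx k).1)
    (Finset.prod_nonneg fun k _ => by linarith [(hx k).2])

lemma gext_update_not_mem {A : Finset M} {j : M} (hj : j ∉ A) (g : Finset M → ℝ)
    (x : M → ℝ) (c : ℝ) : gext A g (Function.update x j c) = gext A g x := by
  apply Finset.sum_congr rfl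
  intro S hS
  rw [Finset.mem_powerset] at hS
  congr 1
  congr 1
  · exact Finset.prod_congr rfl fun k hk => Function.update_of_ne (by rintro rfl; exact hj (hS hk)) _ _
  · refine Finset.prod_congr rfl fun k hk => ?_
    rw [Function.update_of_ne (by rintro rfl; exact hj (Finset.mem_sdiff.mp hk).1)]

lemma gext_update_mem {A : Finset M} {j : M} (hj : j ∈ A) (g : Finset M → ℝ)
    (x : M → ℝ) (c : ℝ) :
    gext A g (Function.update x j c)
      = c * gext (A.erase j) (fun S => g (insert j S)) x + (1 - c) * gext (A.erase j) g x := by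
  rw [gext_split hj, Function.update_self,
    gext_update_not_mem (Finset.notMem_erase _ _), gext_update_not_mem (Finset.notMem_erase _ _)]


lemma gext_mono_x {A : Finset M} {g : Finset M → ℝ} {x x' : M → ℝ}
    (hg : ∀ k ∈ A, ∀ S ∈ (A.erase k).powerset, g S ≤ g (insert k S))
    (hx : ∀ k, 0 ≤ x k ∧ x k ≤ 1) (hx' : ∀ k, 0 ≤ x' k ∧ x' k ≤ 1)
    (hle : ∀ k, x k ≤ x' k) :
    gext A g x ≤ gext A g x' := by
  have key : ∀ s : Finset M,
      gext A g x ≤ gext A g (fun k => if k ∈ s then x' k else x k) := by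
    intro s
    induction s using Finset.induction_on with
    | empty => simp
    | @insert j s hj ih =>
      have hupd : (fun k => if k ∈ insert j s then x' k else x k)
          = Function.update (fun k => if k ∈ s then x' k else x k) j (x' j) := by
        funext k
        by_cases hk : k = j
        · subst hk; simp
        · simp [Function.update_of_ne hk, hk]
      set z := (fun k => if k ∈ s then x' k else x k) with hz
      have hzb : ∀ k, 0 ≤ z k ∧ z k ≤ 1 := by
        intro k; by_cases h : k ∈ s <;> simp [hz, h, hx k, hx' k]
      rw [hupd]
      by_cases hjA : j ∈ A
      · rw [gext_update_mem hjA]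
        have hPQ : gext (A.erase j) g z ≤ gext (A.erase j) (fun S => g (insert j S)) z :=
          gext_mono_g hzb (fun S hS => hg j hjA S hS)
        have hzj : z j = x j := by simp [hz, hj]
        have hsplit := gext_split hjA g z
        have h1 : x j ≤ x' j := hle j
        have h0 : 0 ≤ x j := (hx j).1
        have h2 : x' j ≤ 1 := (hx' j).2
        calc gext A g x ≤ gext A g z := ih
          _ = z j * gext (A.erase j) (fun S => g (insert j S)) z
              + (1 - z j) * gext (A.erase j) g z := hsplit
          _ ≤ x' j * gext (A.erase j) (fun S => g (insert j S)) z
              + (1 - x' j) * gext (A.erase j) g z := by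
                rw [hzj]; nlinarith [mul_nonneg (sub_nonneg.mpr h1) (sub_nonneg.mpr hPQ)]
      · rw [gext_update_not_mem hjA]; exact ih
  have := key Finset.univ
  simpa using this

lemma gext_hasDerivAt (y : M → ℝ) (A : Finset M) :
    ∀ (g : Finset M → ℝ) (t : ℝ),
      HasDerivAt (fun u : ℝ => gext A g (u • y))
        (∑ j ∈ A, y j * gext (A.erase j) (fun S => g (insert j S) - g S) (t • y)) t := by
  induction A using Finset.induction_on with
  | empty =>
      intro g t
      have heq : (fun u : ℝ => gext (∅ : Finset M) g (u • y)) = fun _ => g ∅ * 1 := by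
        funext u; simp [gext]
      rw [heq]
      simpa using hasDerivAt_const t (g ∅ * 1)
  | @insert j s hj ih =>
      intro g t
      have herase : (insert j s).erase j = s := Finset.erase_insert hj
      have hrw : (fun u : ℝ => gext (insert j s) g (u • y))
          = fun u : ℝ => (u * y j) * gext s (fun S => g (insert j S)) (u • y)
            + (1 - u * y j) * gext s g (u • y) := by
        funext u
        have := gext_split (Finset.mem_insert_self j s) g (u • y)
        rw [herase] at this
        simpa [Pi.smul_apply, smul_eq_mul] using this
      rw [hrw]
      have hP := ih (fun S => g (insert j S)) t
      have hQ := ih g t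
      have hc : HasDerivAt (fun u : ℝ => u * y j) (y j) t := by
        simpa using (hasDerivAt_id t).mul_const (y j)
      have h1 := hc.mul hP
      have h2 := ((hasDerivAt_const (𝕜 := ℝ) t (1:ℝ)).sub hc).mul hQ
      have h3 := h1.add h2
      refine h3.congr_deriv ?_
      simp only [Pi.sub_apply]
      rw [Finset.sum_insert hj, herase]
      have hterm : ∀ k ∈ s,
          y k * gext ((insert j s).erase k) (fun S => g (insert k S) - g S) (t • y)
          = (t * y j) * (y k * gext (s.erase k)
                (fun S => g (insert j (insert k S)) - g (insert j S)) (t • y))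
            + (1 - t * y j) * (y k * gext (s.erase k)
                (fun S => g (insert k S) - g S) (t • y)) := by
        intro k hk
        have hjk : j ≠ k := fun h => hj (h ▸ hk)
        have h4 : (insert j s).erase k = insert j (s.erase k) :=
          Finset.erase_insert_of_ne hjk
        have hjm : j ∈ insert j (s.erase k) := Finset.mem_insert_self _ _
        have h5 := gext_split hjm (fun S => g (insert k S) - g S) (t • y)
        have h6 : (insert j (s.erase k)).erase j = s.erase k :=
          Finset.erase_insert (fun h => hj (Finset.mem_of_mem_erase h))
        rw [h6] at h5
        have h7 : (fun S => (fun T => g (insert k T) - g T) (insert j S))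
            = fun S => g (insert j (insert k S)) - g (insert j S) := by
          funext S; rw [Finset.insert_comm]
        rw [h4, h5]
        simp only [Pi.smul_apply, smul_eq_mul]
        rw [h7]
        ring
      rw [Finset.sum_congr rfl hterm, Finset.sum_add_distrib, ← Finset.mul_sum, ← Finset.mul_sum,
        gext_sub]
      ring

/-- negation -/

lemma gext_neg (A : Finset M) (g : Finset M → ℝ) (x : M → ℝ) :
    gext A (fun S => -g S) x = - gext A g x := by
  simp [gext, neg_mul, Finset.sum_neg_distrib]

/-- the value at the indicator vector of `S` is `g S`. -/
lemma gext_indicator (g : Finset M → ℝ) (S : Finset M) :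
    gext Finset.univ g (fun k => if k ∈ S then (1:ℝ) else 0) = g S := by
  rw [gext]
  rw [Finset.sum_eq_single_of_mem S (by simp)]
  · have h1 : (∏ k ∈ S, (if k ∈ S then (1:ℝ) else 0)) = 1 :=
      Finset.prod_eq_one fun k hk => by simp [hk]
    have h2 : (∏ k ∈ Finset.univ \ S, (1 - if k ∈ S then (1:ℝ) else 0)) = 1 :=
      Finset.prod_eq_one fun k hk => by
        have : k ∉ S := (Finset.mem_sdiff.mp hk).2
        simp [this]
    rw [h1, h2]; ring
  · intro T _ hTS
    by_cases hsub : T ⊆ S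
    · have hss : T ⊂ S := Finset.ssubset_iff_subset_ne.mpr ⟨hsub, hTS⟩
      obtain ⟨k, hkS, hkT⟩ := Finset.exists_of_ssubset hss
      have hk : k ∈ Finset.univ \ T := Finset.mem_sdiff.mpr ⟨Finset.mem_univ _, hkT⟩
      rw [Finset.prod_eq_zero hk (by simp [hkS])]
      ring
    · obtain ⟨k, hkT, hkS⟩ := Finset.not_subset.mp hsub
      rw [Finset.prod_eq_zero hkT (by simp [hkS])]
      ring

theorem stmt9core {M : Type*} [Fintype M] [DecidableEq M]
    (v : Finset M → NNReal)
    (hmono : ∀ A B : Finset M, A ⊆ B → v A ≤ v B)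
    (hsub : ∀ A B : Finset M, v (A ∪ B) + v (A ∩ B) ≤ v A + v B)
    (hnorm : v ∅ = 0)
    (y : M → ℝ) (hy : ∀ j, 0 ≤ y j ∧ y j ≤ 1)
    (lam : Finset M → ℝ) (hlam0 : ∀ S, 0 ≤ lam S)
    (hlam1 : ∑ S : Finset M, lam S = 1)
    (hmarg : ∀ j : M, (∑ S : Finset M, lam S * (if j ∈ S then 1 else 0)) = y j) :
    (1 - 1 / Real.exp 1) * (∑ S : Finset M, lam S * (v S : ℝ))
      ≤ gext Finset.univ (fun S => (v S : ℝ)) y := by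
  classical
  set vR : Finset M → ℝ := fun S => (v S : ℝ) with hvR
  set C : ℝ := ∑ S : Finset M, lam S * vR S with hC
  set D : M → (M → ℝ) → ℝ :=
    fun j x => gext ((Finset.univ : Finset M).erase j) (fun S => vR (insert j S) - vR S) x with hD
  set φ : ℝ → ℝ := fun t => gext Finset.univ vR (t • y) with hφdef
  set ψ : ℝ → ℝ := fun t => ∑ j : M, y j * D j (t • y) with hψdef
  have hφ : ∀ t : ℝ, HasDerivAt φ (ψ t) t := fun t => gext_hasDerivAt y Finset.univ vR t
  -- D is nonnegative
  have hD0 : ∀ (j : M) (x : M → ℝ), (∀ k, 0 ≤ x k ∧ x k ≤ 1) → 0 ≤ D j x := by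
    intro j x hx
    refine gext_nonneg hx fun S _ => ?_
    have := hmono S (insert j S) (Finset.subset_insert _ _)
    simp only [hvR, sub_nonneg, NNReal.coe_le_coe]
    exact this
  -- D is antitone (submodularity)
  have hDanti : ∀ (j : M) (x z : M → ℝ), (∀ k, 0 ≤ x k ∧ x k ≤ 1) →
      (∀ k, 0 ≤ z k ∧ z k ≤ 1) → (∀ k, x k ≤ z k) → D j z ≤ D j x := by
    intro j x z hx hz hxz
    have key : gext ((Finset.univ : Finset M).erase j)
          (fun S => -(vR (insert j S) - vR S)) x
        ≤ gext ((Finset.univ : Finset M).erase j)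
          (fun S => -(vR (insert j S) - vR S)) z := by
      refine gext_mono_x ?_ hx hz hxz
      intro k hk S hS
      have hkj : k ≠ j := (Finset.mem_erase.mp hk).1
      rw [Finset.mem_powerset] at hS
      have hjS : j ∉ S := fun h => by
        have := hS h; exact (Finset.mem_erase.mp (Finset.mem_of_mem_erase this)).1 rfl
      have hkS : k ∉ S := fun h => (Finset.mem_erase.mp (hS h)).1 rfl
      have hunion : insert j S ∪ insert k S = insert j (insert k S) := by
        ext a; simp only [Finset.mem_union, Finset.mem_insert]; tauto
      have hinter : insert j S ∩ insert k S = S := by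
        ext a
        simp only [Finset.mem_inter, Finset.mem_insert]
        constructor
        · rintro ⟨h1 | h1, h2 | h2⟩
          · exact absurd (h1.symm.trans h2) hkj.symm
          · exact h2
          · exact h1
          · exact h1
        · intro h; exact ⟨Or.inr h, Or.inr h⟩
      have := hsub (insert j S) (insert k S)
      rw [hunion, hinter] at this
      have hcoe : (v (insert j (insert k S)) : ℝ) + (v S : ℝ)
          ≤ (v (insert j S) : ℝ) + (v (insert k S) : ℝ) := by
        have := NNReal.coe_le_coe.mpr this
        push_cast at this
        linarith
      simp only [hvR, neg_sub]
      linarith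
    have h1 : gext ((Finset.univ : Finset M).erase j)
        (fun S => -(vR (insert j S) - vR S)) x
        = - D j x := gext_neg _ _ _
    have h2 : gext ((Finset.univ : Finset M).erase j)
        (fun S => -(vR (insert j S) - vR S)) z
        = - D j z := gext_neg _ _ _
    rw [h1, h2] at key
    linarith
  -- merge bound / telescoping lemma
  have TEL : ∀ (S : Finset M) (x : M → ℝ), (∀ k, 0 ≤ x k ∧ x k ≤ 1) →
      gext Finset.univ vR (fun k => if k ∈ S then 1 else x k) - gext Finset.univ vR x
        ≤ ∑ j ∈ S, (1 - x j) * D j x := by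
    intro S
    induction S using Finset.induction_on with
    | empty => intro x hx; simp
    | @insert j S hj ih =>
      intro x hx
      set z : M → ℝ := fun k => if k ∈ S then 1 else x k with hzdef
      have hzb : ∀ k, 0 ≤ z k ∧ z k ≤ 1 := by
        intro k; by_cases h : k ∈ S <;> simp [hzdef, h, hx k]
      have hxz : ∀ k, x k ≤ z k := by
        intro k; by_cases h : k ∈ S <;> simp [hzdef, h, (hx k).2]
      have hupd : (fun k => if k ∈ insert j S then (1:ℝ) else x k) = Function.update z j 1 := by
        funext k
        by_cases hk : k = j
        · subst hk; simp [hzdef]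
        · simp [Function.update_of_ne hk, hzdef, hk]
      have hju : j ∈ (Finset.univ : Finset M) := Finset.mem_univ _
      have e1 : gext Finset.univ vR (Function.update z j 1)
          = gext ((Finset.univ : Finset M).erase j) (fun S => vR (insert j S)) z := by
        rw [gext_update_mem hju]; ring
      have e2 : gext Finset.univ vR z
          = z j * gext ((Finset.univ : Finset M).erase j) (fun S => vR (insert j S)) z
            + (1 - z j) * gext ((Finset.univ : Finset M).erase j) vR z :=
        gext_split hju vR z
      have e3 : gext ((Finset.univ : Finset M).erase j) (fun S => vR (insert j S)) z
            - gext ((Finset.univ : Finset M).erase j) vR z = D j z := by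
        rw [hD, ← gext_sub]
      have hzj : z j = x j := by simp [hzdef, hj]
      have hDle : D j z ≤ D j x := hDanti j x z hx hzb hxz
      have hstep : gext Finset.univ vR (Function.update z j 1) - gext Finset.univ vR z
          ≤ (1 - x j) * D j x := by
        rw [e1, e2]
        have : gext ((Finset.univ : Finset M).erase j) (fun S => vR (insert j S)) z
            - (z j * gext ((Finset.univ : Finset M).erase j) (fun S => vR (insert j S)) z
              + (1 - z j) * gext ((Finset.univ : Finset M).erase j) vR z)
            = (1 - z j) * D j z := by
          rw [← e3]; ring
        rw [this, hzj]
        have h1x : 0 ≤ 1 - x j := by linarith [(hx j).2]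
        exact mul_le_mul_of_nonneg_left hDle h1x
      have := ih x hx
      rw [hupd, Finset.sum_insert hj]
      linarith
  -- gext at merge S x is at least vR S
  have hF1S : ∀ (S : Finset M) (x : M → ℝ), (∀ k, 0 ≤ x k ∧ x k ≤ 1) →
      vR S ≤ gext Finset.univ vR (fun k => if k ∈ S then 1 else x k) := by
    intro S x hx
    have h1 : gext Finset.univ vR (fun k => if k ∈ S then (1:ℝ) else 0) = vR S :=
      gext_indicator vR S
    rw [← h1]
    refine gext_mono_x ?_ ?_ ?_ ?_
    · intro k _ T _
      exact NNReal.coe_le_coe.mpr (hmono T (insert k T) (Finset.subset_insert _ _))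
    · intro k; by_cases h : k ∈ S <;> simp [h]
    · intro k; by_cases h : k ∈ S <;> simp [h, hx k]
    · intro k; by_cases h : k ∈ S <;> simp [h, (hx k).1]
  -- the key differential inequality
  have key : ∀ t ∈ Set.Icc (0:ℝ) 1, C - φ t ≤ ψ t := by
    intro t ht
    have hx : ∀ k, 0 ≤ (t • y) k ∧ (t • y) k ≤ 1 := by
      intro k
      simp only [Pi.smul_apply, smul_eq_mul]
      constructor
      · exact mul_nonneg ht.1 (hy k).1
      · exact mul_le_one₀ ht.2 (hy k).1 (hy k).2
    set x : M → ℝ := t • y with hxdef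
    have step1 : ∑ j : M, y j * ((1 - x j) * D j x) ≤ ψ t := by
      refine Finset.sum_le_sum fun j _ => ?_
      have hDj := hD0 j x hx
      have h1 : (1 - x j) * D j x ≤ D j x := by
        nlinarith [(hx j).1]
      exact mul_le_mul_of_nonneg_left h1 (hy j).1
    have step2 : ∑ j : M, y j * ((1 - x j) * D j x)
        = ∑ S : Finset M, lam S * ∑ j ∈ S, (1 - x j) * D j x := by
      have e1 : ∀ j : M, y j * ((1 - x j) * D j x)
          = ∑ S : Finset M, lam S * (if j ∈ S then (1 - x j) * D j x else 0) := by
        intro j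
        rw [← hmarg j, Finset.sum_mul]
        refine Finset.sum_congr rfl fun S _ => ?_
        by_cases h : j ∈ S <;> simp [h] <;> ring
      rw [Finset.sum_congr rfl fun j _ => e1 j, Finset.sum_comm]
      refine Finset.sum_congr rfl fun S _ => ?_
      rw [← Finset.mul_sum]
      congr 1
      rw [Finset.sum_ite_mem, Finset.univ_inter]
    have step3 : ∑ S : Finset M, lam S * (vR S - φ t)
        ≤ ∑ S : Finset M, lam S * ∑ j ∈ S, (1 - x j) * D j x := by
      refine Finset.sum_le_sum fun S _ => ?_
      refine mul_le_mul_of_nonneg_left ?_ (hlam0 S)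
      have h1 := TEL S x hx
      have h2 := hF1S S x hx
      have : φ t = gext Finset.univ vR x := by rw [hφdef]
      linarith
    have step4 : ∑ S : Finset M, lam S * (vR S - φ t) = C - φ t := by
      rw [hC]
      rw [show (∑ S : Finset M, lam S * (vR S - φ t))
        = ∑ S : Finset M, (lam S * vR S - lam S * φ t) from
        Finset.sum_congr rfl fun S _ => by ring]
      rw [Finset.sum_sub_distrib, ← Finset.sum_mul, hlam1, one_mul]
    linarith
  -- Gronwall
  set E : ℝ := Real.exp 1 with hE
  have hEpos : 0 < E := Real.exp_pos 1
  set h : ℝ → ℝ := fun t => Real.exp t * (φ t - C) with hhdef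
  have hh : ∀ t : ℝ, HasDerivAt h (Real.exp t * (φ t - C) + Real.exp t * ψ t) t := by
    intro t
    have := (Real.hasDerivAt_exp t).mul ((hφ t).sub_const C)
    exact this
  have hmonoh : MonotoneOn h (Set.Icc (0:ℝ) 1) := by
    refine monotoneOn_of_deriv_nonneg (convex_Icc 0 1) ?_ ?_ ?_
    · exact fun t _ => ((hh t).differentiableAt).continuousAt.continuousWithinAt
    · exact fun t _ => ((hh t).differentiableAt).differentiableWithinAt
    · intro t ht
      rw [interior_Icc] at ht
      rw [(hh t).deriv]
      have hk := key t ⟨le_of_lt ht.1, le_of_lt ht.2⟩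
      have := Real.exp_pos t
      nlinarith
  have h01 : h 0 ≤ h 1 := hmonoh (Set.mem_Icc.mpr ⟨le_refl 0, zero_le_one⟩)
    (Set.mem_Icc.mpr ⟨zero_le_one, le_refl 1⟩) zero_le_one
  have hφ0 : φ 0 = 0 := by
    have h1 : (0:ℝ) • y = fun k => if k ∈ (∅ : Finset M) then (1:ℝ) else 0 := by
      funext k; simp
    rw [hφdef]
    show gext Finset.univ vR ((0:ℝ) • y) = 0
    rw [h1, gext_indicator]
    simp [hvR, hnorm]
  have hφ1 : φ 1 = gext Finset.univ vR y := by
    rw [hφdef]; show gext Finset.univ vR ((1:ℝ) • y) = _; rw [one_smul]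
  rw [hhdef] at h01
  simp only [Real.exp_zero, one_mul, hφ0, zero_sub] at h01
  rw [hφ1] at h01
  -- h01 : -C ≤ Real.exp 1 * (gext univ vR y - C)
  rw [← hE] at h01
  rw [mul_sub] at h01
  have hne : E ≠ 0 := ne_of_gt hEpos
  have h2 : E * ((1 - 1 / E) * C) ≤ E * gext Finset.univ vR y := by
    have he : E * ((1 - 1 / E) * C) = E * C - C := by field_simp
    linarith
  exact le_of_mul_le_mul_left h2 hEpos

lemma mlExt_eq_gext {M : Type*} [Fintype M] [DecidableEq M]
    (v : Finset M → NNReal) (y : M → ℝ) :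
    mlExt v y = gext Finset.univ (fun S => (v S : ℝ)) y := by
  rw [mlExt, gext, Finset.powerset_univ]
  refine Finset.sum_congr rfl fun S _ => ?_
  rw [Finset.compl_eq_univ_sdiff]


end stmt9aux

/-- the multilinear extension is at least a `(1 - 1/e)` fraction of the
concave closure. -/
theorem stmt9 {M : Type*} [Fintype M] [DecidableEq M]
    (v : Finset M → NNReal)
    (hmono : IsMonotoneVal v) (hsub : IsSubmodular v) (hnorm : IsNormalized v)
    (y : M → ℝ) (hy : ∀ j, 0 ≤ y j ∧ y j ≤ 1) :
    (1 - 1 / Real.exp 1) * concaveClosure v y ≤ mlExt v y := by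
  have hF0 : 0 ≤ mlExt v y := by
    rw [mlExt]
    refine Finset.sum_nonneg fun S _ => ?_
    refine mul_nonneg (NNReal.coe_nonneg _) (mul_nonneg ?_ ?_)
    · exact Finset.prod_nonneg fun k _ => (hy k).1
    · exact Finset.prod_nonneg fun k _ => by linarith [(hy k).2]
  have hexp1 : 1 < Real.exp 1 := by
    have := Real.add_one_lt_exp (by norm_num : (1:ℝ) ≠ 0)
    linarith
  have hpos : 0 < 1 - 1 / Real.exp 1 := by
    have h1 : 1 / Real.exp 1 < 1 := by
      rw [div_lt_one (by positivity)]
      exact hexp1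
    linarith
  have hsup : concaveClosure v y ≤ mlExt v y / (1 - 1 / Real.exp 1) := by
    rw [concaveClosure]
    refine Real.sSup_le ?_ (div_nonneg hF0 hpos.le)
    rintro r ⟨lam, hlam0, hlam1, hmarg, rfl⟩
    have := stmt9core v hmono hsub hnorm y hy lam hlam0 hlam1 hmarg
    rw [← mlExt_eq_gext] at this
    rw [le_div_iff₀ hpos]
    linarith
  calc (1 - 1 / Real.exp 1) * concaveClosure v y
      ≤ (1 - 1 / Real.exp 1) * (mlExt v y / (1 - 1 / Real.exp 1)) :=
        mul_le_mul_of_nonneg_left hsup hpos.le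
    _ = mlExt v y := mul_div_cancel₀ _ (ne_of_gt hpos)
end

section
/- Let v : 2^M → ℝ≥0 be a monotone, submodular, normalized valuation with multilinear extension V, let n ≥ 1, and let MMS denote the maximin share value of v over n parts, i.e., MMS = max over partitions (P_1,…,P_n) of M of min_k v(P_k). Then V(u) ≥ (1 − 1/e) · MMS, where u ∈ [0,1]^M is the vector with u_j = 1/n for every item j. -/
open Finset

section MMSAux

namespace MMS13

variable {M : Type*} [Fintype M] [DecidableEq M]

variable {M : Type*} [Fintype M] [DecidableEq M]

lemma marg_sum (v : Finset M → NNReal) (hsub : IsSubmodular v) (S : Finset M) :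
    ∀ T : Finset M, (∀ a ∈ T, a ∉ S) →
      (v (S ∪ T) : ℝ) - v S ≤ ∑ j ∈ T, ((v (insert j S) : ℝ) - v S) := by
  intro T
  induction T using Finset.induction_on with
  | empty => intro _; simp
  | @insert a T ha ih =>
    intro hT
    have hT' : ∀ b ∈ T, b ∉ S := fun b hb => hT b (Finset.mem_insert_of_mem hb)
    have hunion : (S ∪ T) ∪ insert a S = S ∪ insert a T := by
      ext x; simp only [Finset.mem_union, Finset.mem_insert]; tauto
    have hinter : (S ∪ T) ∩ insert a S = S := by
      ext x
      simp only [Finset.mem_inter, Finset.mem_union, Finset.mem_insert]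
      constructor
      · rintro ⟨h1 | h1, rfl | h2⟩ <;> first | assumption | exact absurd h1 ha
      · intro h; exact ⟨Or.inl h, Or.inr h⟩
    have hsm := hsub (S ∪ T) (insert a S)
    rw [hunion, hinter] at hsm
    have hsm' : (v (S ∪ insert a T) : ℝ) + v S ≤ v (S ∪ T) + v (insert a S) := by
      exact_mod_cast hsm
    rw [Finset.sum_insert ha]
    have := ih hT'
    linarith

lemma sum_marg_lb (v : Finset M → NNReal) (hmono : IsMonotoneVal v) (hsub : IsSubmodular v)
    {n : ℕ} (P : Fin n → Finset M) (hP : ∀ j : M, ∃! k, j ∈ P k)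
    (μ : ℝ) (hμ : ∀ k, μ ≤ v (P k)) (S : Finset M) :
    (n : ℝ) * (μ - v S) ≤ ∑ j ∈ Sᶜ, ((v (insert j S) : ℝ) - v S) := by
  classical
  set t : M → Fin n := fun j => (hP j).choose with ht
  have htmem : ∀ j, j ∈ P (t j) := fun j => (hP j).choose_spec.1
  have htuniq : ∀ j k, j ∈ P k → t j = k := fun j k hk => ((hP j).choose_spec.2 k hk).symm
  rw [← Finset.sum_fiberwise_of_maps_to (t := Finset.univ) (g := t)
    (fun j _ => Finset.mem_univ (t j))]
  have key : ∀ k : Fin n, μ - (v S : ℝ) ≤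
      ∑ j ∈ Sᶜ.filter (fun j => t j = k), ((v (insert j S) : ℝ) - v S) := by
    intro k
    have hTsub : ∀ a ∈ Sᶜ.filter (fun j => t j = k), a ∉ S := by
      intro a hamem
      simp only [Finset.mem_filter, Finset.mem_compl] at hamem
      exact hamem.1
    have h1 := marg_sum v hsub S _ hTsub
    have hS : S ∪ Sᶜ.filter (fun j => t j = k) = S ∪ P k := by
      ext x
      simp only [Finset.mem_union, Finset.mem_filter, Finset.mem_compl]
      constructor
      · rintro (hx | ⟨-, rfl⟩)
        · exact Or.inl hx
        · exact Or.inr (htmem x)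
      · rintro (hx | hx)
        · exact Or.inl hx
        · by_cases hxS : x ∈ S
          · exact Or.inl hxS
          · exact Or.inr ⟨hxS, htuniq x k hx⟩
    rw [hS] at h1
    have h2 : (v (P k) : ℝ) ≤ v (S ∪ P k) := by
      exact_mod_cast hmono _ _ Finset.subset_union_right
    have h3 := hμ k
    linarith
  calc (n : ℝ) * (μ - v S) = ∑ _k : Fin n, (μ - (v S : ℝ)) := by
        rw [Finset.sum_const, Finset.card_univ, Fintype.card_fin, nsmul_eq_mul]
    _ ≤ _ := Finset.sum_le_sum fun k _ => key k

lemma pair_reindex (F : Finset M → M → ℝ) :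
    ∑ T : Finset M, ∑ j ∈ T, F T j = ∑ S : Finset M, ∑ j ∈ Sᶜ, F (insert j S) j := by
  rw [Finset.sum_sigma' Finset.univ (fun T => T) (fun T j => F T j),
      Finset.sum_sigma' Finset.univ (fun S => Sᶜ) (fun S j => F (insert j S) j)]
  refine Finset.sum_nbij' (fun p => ⟨p.1.erase p.2, p.2⟩) (fun p => ⟨insert p.2 p.1, p.2⟩)
    ?_ ?_ ?_ ?_ ?_
  · rintro ⟨T, j⟩ h
    simp only [Finset.mem_sigma, Finset.mem_univ, true_and] at h ⊢
    simp [Finset.mem_compl]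
  · rintro ⟨S, j⟩ h
    simp only [Finset.mem_sigma, Finset.mem_univ, true_and] at h ⊢
    simp
  · rintro ⟨T, j⟩ h
    simp only [Finset.mem_sigma, Finset.mem_univ, true_and] at h
    simp [Finset.insert_erase h]
  · rintro ⟨S, j⟩ h
    simp only [Finset.mem_sigma, Finset.mem_univ, true_and, Finset.mem_compl] at h
    simp [Finset.erase_insert h]
  · rintro ⟨T, j⟩ h
    simp only [Finset.mem_sigma, Finset.mem_univ, true_and] at h
    simp [Finset.insert_erase h]


variable {M : Type*} [Fintype M] [DecidableEq M]

noncomputable def gfun (v : Finset M → NNReal) (s : ℝ) : ℝ :=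
  ∑ S : Finset M, (v S : ℝ) * (s ^ S.card * (1 - s) ^ Sᶜ.card)

noncomputable def Dfun (v : Finset M → NNReal) (s : ℝ) : ℝ :=
  ∑ S : Finset M, (∑ j ∈ Sᶜ, ((v (insert j S) : ℝ) - v S)) *
    (s ^ S.card * (1 - s) ^ (Sᶜ.card - 1))


lemma gfun_hasDeriv (v : Finset M → NNReal) (s : ℝ) :
    HasDerivAt (gfun v) (Dfun v s) s := by
  classical
  have hterm : ∀ S : Finset M,
      HasDerivAt (fun x : ℝ => (v S : ℝ) * (x ^ S.card * (1 - x) ^ Sᶜ.card))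
      ((v S : ℝ) * ((S.card * s ^ (S.card - 1)) * (1 - s) ^ Sᶜ.card
        + s ^ S.card * ((Sᶜ.card * (1 - s) ^ (Sᶜ.card - 1)) * (-1)))) s := by
    intro S
    have h1 : HasDerivAt (fun x : ℝ => x ^ S.card) ((S.card : ℝ) * s ^ (S.card - 1)) s :=
      hasDerivAt_pow _ _
    have h0 : HasDerivAt (fun x : ℝ => 1 - x) (-1) s := by
      simpa using (hasDerivAt_id s).const_sub (1 : ℝ)
    have h2 : HasDerivAt (fun x : ℝ => (1 - x) ^ Sᶜ.card)
        (((Sᶜ.card : ℝ) * (1 - s) ^ (Sᶜ.card - 1)) * (-1)) s :=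
      HasDerivAt.comp s (hasDerivAt_pow _ _) h0
    exact (h1.mul h2).const_mul _
  have hsum := HasDerivAt.fun_sum (fun S (_ : S ∈ (Finset.univ : Finset (Finset M))) => hterm S)
  have heq : ∑ S : Finset M, (v S : ℝ) * ((S.card * s ^ (S.card - 1)) * (1 - s) ^ Sᶜ.card
        + s ^ S.card * ((Sᶜ.card * (1 - s) ^ (Sᶜ.card - 1)) * (-1))) = Dfun v s := by
    have hsplit : ∑ S : Finset M, (v S : ℝ) * ((S.card * s ^ (S.card - 1)) * (1 - s) ^ Sᶜ.card
        + s ^ S.card * ((Sᶜ.card * (1 - s) ^ (Sᶜ.card - 1)) * (-1)))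
      = (∑ S : Finset M, (v S : ℝ) * ((S.card * s ^ (S.card - 1)) * (1 - s) ^ Sᶜ.card))
        - ∑ S : Finset M, (v S : ℝ) * (Sᶜ.card * (s ^ S.card * (1 - s) ^ (Sᶜ.card - 1))) := by
      rw [← Finset.sum_sub_distrib]
      refine Finset.sum_congr rfl fun S _ => by ring
    have hA : ∑ S : Finset M, (v S : ℝ) * ((S.card * s ^ (S.card - 1)) * (1 - s) ^ Sᶜ.card)
        = ∑ S : Finset M, ∑ j ∈ Sᶜ, (v (insert j S) : ℝ) * (s ^ S.card * (1 - s) ^ (Sᶜ.card - 1)) := by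
      have h1 : ∀ (S : Finset M), ∀ j ∈ Sᶜ,
          (v (insert j S) : ℝ) * (s ^ S.card * (1 - s) ^ (Sᶜ.card - 1))
          = (v (insert j S) : ℝ) * (s ^ ((insert j S).card - 1) * (1 - s) ^ ((insert j S)ᶜ.card)) := by
        intro S j hj
        rw [Finset.mem_compl] at hj
        rw [Finset.card_insert_of_notMem hj, Nat.add_sub_cancel,
          Finset.compl_insert, Finset.card_erase_of_mem (Finset.mem_compl.mpr hj)]
      rw [Finset.sum_congr rfl (fun S _ => Finset.sum_congr rfl (h1 S)),
        ← pair_reindex (fun T j => (v T : ℝ) * (s ^ (T.card - 1) * (1 - s) ^ (Tᶜ.card)))]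
      refine Finset.sum_congr rfl fun S _ => ?_
      rw [Finset.sum_const, nsmul_eq_mul]
      ring
    have hB : ∀ S : Finset M, (v S : ℝ) * (Sᶜ.card * (s ^ S.card * (1 - s) ^ (Sᶜ.card - 1)))
        = (∑ j ∈ Sᶜ, (v S : ℝ)) * (s ^ S.card * (1 - s) ^ (Sᶜ.card - 1)) := by
      intro S
      rw [Finset.sum_const, nsmul_eq_mul]
      ring
    rw [hsplit, hA]
    unfold Dfun
    rw [← Finset.sum_sub_distrib]
    refine Finset.sum_congr rfl fun S _ => ?_
    rw [hB S, Finset.sum_sub_distrib, sub_mul, Finset.sum_mul, Finset.sum_mul]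
  rw [← heq]
  exact hsum

lemma sum_w (s : ℝ) : ∑ S : Finset M, s ^ S.card * (1 - s) ^ Sᶜ.card = 1 := by
  classical
  have h := Finset.prod_add (fun _ : M => s) (fun _ : M => 1 - s) Finset.univ
  simp only [Finset.prod_const] at h
  have hs : s + (1 - s) = 1 := by ring
  rw [hs, one_pow, Finset.powerset_univ] at h
  calc ∑ S : Finset M, s ^ S.card * (1 - s) ^ Sᶜ.card
      = ∑ S : Finset M, s ^ S.card * (1 - s) ^ ((Finset.univ \ S).card) := by
        refine Finset.sum_congr rfl fun S _ => ?_
        rw [← Finset.compl_eq_univ_sdiff]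
    _ = 1 := h.symm

lemma gfun_zero (v : Finset M → NNReal) (hnorm : v ∅ = 0) : gfun v 0 = 0 := by
  classical
  unfold gfun
  rw [Finset.sum_eq_single ∅]
  · simp [hnorm]
  · intro S _ hS
    have hc : S.card ≠ 0 := by simpa [Finset.card_eq_zero] using hS
    simp [zero_pow hc]
  · simp

lemma Dfun_nonneg (v : Finset M → NNReal) (hmono : IsMonotoneVal v)
    {s : ℝ} (h0 : 0 ≤ s) (h1 : s ≤ 1) : 0 ≤ Dfun v s := by
  refine Finset.sum_nonneg fun S _ => ?_
  refine mul_nonneg (Finset.sum_nonneg fun j _ => ?_) (mul_nonneg (pow_nonneg h0 _) (pow_nonneg (by linarith) _))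
  have : v S ≤ v (insert j S) := hmono _ _ (Finset.subset_insert _ _)
  simpa using sub_nonneg.mpr ((NNReal.coe_le_coe).mpr this)
lemma key_ineq (v : Finset M → NNReal) (hmono : IsMonotoneVal v) (hsub : IsSubmodular v)
    {n : ℕ} (hn : 0 < n) (P : Fin n → Finset M) (hP : ∀ j : M, ∃! k, j ∈ P k)
    (μ : ℝ) (hμ : ∀ k, μ ≤ v (P k))
    {s : ℝ} (h0 : 0 ≤ s) (h1 : s ≤ 1) :
    (n : ℝ) * (μ - gfun v s) ≤ Dfun v s := by
  classical
  have hD := Dfun_nonneg v hmono h0 h1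
  have hμuniv : μ ≤ (v Finset.univ : ℝ) := by
    have h2 : (v (P ⟨0, hn⟩) : ℝ) ≤ v Finset.univ := by
      exact_mod_cast hmono _ _ (Finset.subset_univ _)
    linarith [hμ ⟨0, hn⟩]
  have step : (n : ℝ) * (μ - gfun v s) ≤ (1 - s) * Dfun v s := by
    have expand : (1 - s) * Dfun v s
        = ∑ S : Finset M, (∑ j ∈ Sᶜ, ((v (insert j S) : ℝ) - v S)) *
            (s ^ S.card * (1 - s) ^ (Sᶜ.card - 1)) * (1 - s) := by
      unfold Dfun
      rw [Finset.mul_sum]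
      exact Finset.sum_congr rfl fun S _ => by ring
    have tw : (n : ℝ) * (μ - gfun v s)
        = ∑ S : Finset M, (n : ℝ) * (μ - v S) * (s ^ S.card * (1 - s) ^ Sᶜ.card) := by
      have : ∑ S : Finset M, (n : ℝ) * (μ - v S) * (s ^ S.card * (1 - s) ^ Sᶜ.card)
          = (n : ℝ) * μ * (∑ S : Finset M, s ^ S.card * (1 - s) ^ Sᶜ.card)
            - (n : ℝ) * ∑ S : Finset M, (v S : ℝ) * (s ^ S.card * (1 - s) ^ Sᶜ.card) := by
        rw [Finset.mul_sum, Finset.mul_sum, ← Finset.sum_sub_distrib]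
        exact Finset.sum_congr rfl fun S _ => by ring
      rw [this, sum_w]
      unfold gfun
      ring
    rw [expand, tw]
    refine Finset.sum_le_sum fun S _ => ?_
    by_cases hc : Sᶜ = ∅
    · have hsum0 : (∑ j ∈ Sᶜ, ((v (insert j S) : ℝ) - v S)) = 0 := by rw [hc]; simp
      have hSuniv : S = Finset.univ := by
        rwa [Finset.compl_eq_empty_iff] at hc
      rw [hsum0, hSuniv]
      have : μ - (v (Finset.univ : Finset M) : ℝ) ≤ 0 := by linarith
      have hw : (0:ℝ) ≤ s ^ (Finset.univ : Finset M).card * (1 - s) ^ (Finset.univ : Finset M)ᶜ.card :=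
        mul_nonneg (pow_nonneg h0 _) (pow_nonneg (by linarith) _)
      rw [zero_mul, zero_mul]
      exact mul_nonpos_of_nonpos_of_nonneg
        (mul_nonpos_of_nonneg_of_nonpos (Nat.cast_nonneg n) this) hw
    · have hcard : 0 < Sᶜ.card := Finset.card_pos.mpr (Finset.nonempty_of_ne_empty hc)
      have hpow : (1 - s) ^ (Sᶜ.card - 1) * (1 - s) = (1 - s) ^ Sᶜ.card := by
        rw [← pow_succ, Nat.sub_add_cancel hcard]
      have hw : (0:ℝ) ≤ s ^ S.card * (1 - s) ^ Sᶜ.card :=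
        mul_nonneg (pow_nonneg h0 _) (pow_nonneg (by linarith) _)
      calc (n : ℝ) * (μ - v S) * (s ^ S.card * (1 - s) ^ Sᶜ.card)
          ≤ (∑ j ∈ Sᶜ, ((v (insert j S) : ℝ) - v S)) * (s ^ S.card * (1 - s) ^ Sᶜ.card) :=
            mul_le_mul_of_nonneg_right (sum_marg_lb v hmono hsub P hP μ hμ S) hw
        _ = (∑ j ∈ Sᶜ, ((v (insert j S) : ℝ) - v S)) *
              (s ^ S.card * (1 - s) ^ (Sᶜ.card - 1)) * (1 - s) := by
            rw [← hpow]; ring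
  rcases le_or_gt μ (gfun v s) with h | h
  · have : (n : ℝ) * (μ - gfun v s) ≤ 0 :=
      mul_nonpos_of_nonneg_of_nonpos (Nat.cast_nonneg n) (by linarith)
    linarith
  · nlinarith

end MMS13

end MMSAux

open MMS13 in
/-- the multilinear extension at the uniform `1/n` point is at least a
`(1 - 1/e)` fraction of the maximin share over `n` parts. -/
theorem stmt13 {M : Type*} [Fintype M] [DecidableEq M]
    (v : Finset M → NNReal)
    (hmono : IsMonotoneVal v) (hsub : IsSubmodular v) (hnorm : IsNormalized v)
    (n : ℕ) (hn : 1 ≤ n) :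
    (1 - 1 / Real.exp 1) * mmsValue n v ≤ mlExt v (fun _ => 1 / (n : ℝ)) := by
  classical
  have hn0 : 0 < n := hn
  haveI : Nonempty (Fin n) := ⟨⟨0, hn0⟩⟩
  have hnR : (0 : ℝ) < n := by exact_mod_cast hn0
  -- the mms value is attained by some partition
  set R : Set ℝ := {r : ℝ | ∃ P : Fin n → Finset M, (∀ j : M, ∃! k, j ∈ P k) ∧
    r = ⨅ k, (v (P k) : ℝ)} with hR
  have hne : R.Nonempty := by
    refine ⟨⨅ k, (v ((fun k : Fin n => if k = ⟨0, hn0⟩ then (Finset.univ : Finset M) else ∅) k) : ℝ),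
      _, fun j => ?_, rfl⟩
    refine ⟨⟨0, hn0⟩, by simp, fun y hy => ?_⟩
    by_contra h
    simp only [if_neg h] at hy
    exact absurd hy (Finset.notMem_empty j)
  have hfin : R.Finite := by
    apply Set.Finite.subset (Set.finite_range
      (fun P : Fin n → Finset M => ⨅ k, (v (P k) : ℝ)))
    rintro r ⟨P, -, rfl⟩
    exact ⟨P, rfl⟩
  have hmem : mmsValue n v ∈ R := Set.Nonempty.csSup_mem hne hfin
  obtain ⟨P, hPpart, hPval⟩ := hmem
  set μ : ℝ := mmsValue n v with hμdef
  have hμ : ∀ k, μ ≤ (v (P k) : ℝ) := by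
    intro k
    exact hPval.trans_le (ciInf_le (Finite.bddBelow_range _) k)
  -- Gronwall
  set φ : ℝ → ℝ := fun s => Real.exp ((n : ℝ) * s) * (gfun v s - μ) with hφ
  have hφderiv : ∀ s : ℝ, HasDerivAt φ
      (Real.exp ((n : ℝ) * s) * (n : ℝ) * (gfun v s - μ) + Real.exp ((n : ℝ) * s) * Dfun v s) s := by
    intro s
    have h1 : HasDerivAt (fun s : ℝ => Real.exp ((n : ℝ) * s)) (Real.exp ((n : ℝ) * s) * n) s := by
      simpa [Function.comp_def] using (Real.hasDerivAt_exp ((n : ℝ) * s)).comp s ((hasDerivAt_id s).const_mul (n : ℝ))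
    have h2 : HasDerivAt (fun s => gfun v s - μ) (Dfun v s) s :=
      (gfun_hasDeriv v s).sub_const μ
    simpa [hφ, Pi.mul_def] using h1.mul h2
  have hdiff : Differentiable ℝ φ := fun s => (hφderiv s).differentiableAt
  have hmonoφ : MonotoneOn φ (Set.Icc 0 (1 / (n : ℝ))) := by
    apply monotoneOn_of_deriv_nonneg (convex_Icc _ _) hdiff.continuous.continuousOn
      hdiff.differentiableOn
    intro x hx
    rw [interior_Icc, Set.mem_Ioo] at hx
    rw [(hφderiv x).deriv]
    have hx1 : x ≤ 1 := by
      have : (1 : ℝ) / n ≤ 1 := by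
        rw [div_le_one hnR]; exact_mod_cast hn
      linarith [hx.2]
    have hk := key_ineq v hmono hsub hn0 P hPpart μ hμ hx.1.le hx1
    have hexp : 0 ≤ Real.exp ((n : ℝ) * x) := (Real.exp_pos _).le
    nlinarith
  have h01 : (0 : ℝ) ≤ 1 / n := by positivity
  have hmono01 : φ 0 ≤ φ (1 / n) :=
    hmonoφ (Set.mem_Icc.mpr ⟨le_refl _, h01⟩) (Set.mem_Icc.mpr ⟨h01, le_refl _⟩) h01
  have hφ0 : φ 0 = -μ := by
    simp [hφ, gfun_zero v hnorm]
  have hφ1 : φ (1 / n) = Real.exp 1 * (gfun v (1 / n) - μ) := by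
    rw [hφ]
    simp only
    rw [mul_one_div, div_self (ne_of_gt hnR)]
  have hfinal : (1 - 1 / Real.exp 1) * μ ≤ gfun v (1 / n) := by
    rw [hφ0, hφ1] at hmono01
    have he : (0 : ℝ) < Real.exp 1 := Real.exp_pos 1
    rw [mul_sub] at hmono01
    have hkey : Real.exp 1 * ((1 - 1 / Real.exp 1) * μ) ≤ Real.exp 1 * gfun v (1 / n) := by
      have heq : Real.exp 1 * ((1 - 1 / Real.exp 1) * μ) = Real.exp 1 * μ - μ := by
        field_simp
      rw [heq]
      linarith
    exact le_of_mul_le_mul_left hkey he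
  have hml : mlExt v (fun _ => 1 / (n : ℝ)) = gfun v (1 / n) := by
    unfold mlExt gfun
    refine Finset.sum_congr rfl fun S _ => ?_
    rw [Finset.prod_const, Finset.prod_const]
  rw [hml]
  exact hfinal
end
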